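/- arXiv:1312.7820 — 4 statements merged into one kernel-verified Lean document; each statement's English description precedes it below -/
import Mathlib

section
/- Let v ∈ O₃⁺ and ω ∈ ℝ. The arithmetical discrete plane P(v,ω) is 2-connected if and only if P(F(v), ω − v₁) is 2-connected; consequently Ω(v) = Ω(F(v)) + v₁. Moreover, if v ∈ F₃ then Ω(v) = Σ_{n=0}^∞ v₁⁽ⁿ⁾ = ‖v‖₁/2. -/
open Matrix
open scoped Classical

noncomputable section

abbrev Z3 := Fin 3 → ℤ
abbrev R3 := Fin 3 → ℝ

/-- The inner product `⟨x, v⟩` of an integer vector with a real vector. -/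
def dot3 (x : Z3) (v : R3) : ℝ := ∑ i, (x i : ℝ) * v i

/-- Two points of `ℤ³` are 2-adjacent if `‖x − y‖₁ = 1`. -/
def adj3 (x y : Z3) : Prop := (∑ i, |x i - y i|) = 1

/-- A subset of `ℤ³` is 2-connected if it is nonempty and any two of its points are
joined by a finite chain of points of the set with consecutive points 2-adjacent. -/
def Connected3 (A : Set Z3) : Prop :=
  A.Nonempty ∧ ∀ x ∈ A, ∀ y ∈ A,
    Relation.ReflTransGen (fun a b => b ∈ A ∧ adj3 a b) x y

/-- The arithmetical discrete plane `P(v, ω)`. -/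
def Plane (v : R3) (ω : ℝ) : Set Z3 := {x | 0 ≤ dot3 x v ∧ dot3 x v < ω}

/-- The connecting thickness `Ω(v)`. -/
def omegaConn (v : R3) : ℝ := sInf {ω : ℝ | 0 ≤ ω ∧ Connected3 (Plane v ω)}

/-- `O₃⁺ = {v : 0 ≤ v₁ ≤ v₂ ≤ v₃}`. -/
def O3 : Set R3 := {v | 0 ≤ v 0 ∧ v 0 ≤ v 1 ∧ v 1 ≤ v 2}

/-- The ordered fully subtractive map. -/
def FS (v : R3) : R3 :=
  if v 0 ≤ v 1 - v 0 ∧ v 1 - v 0 ≤ v 2 - v 0 then ![v 0, v 1 - v 0, v 2 - v 0]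
  else if v 1 - v 0 < v 0 ∧ v 0 ≤ v 2 - v 0 then ![v 1 - v 0, v 0, v 2 - v 0]
  else ![v 1 - v 0, v 2 - v 0, v 0]

/-- `F₃ = {v ∈ O₃⁺ : v₁⁽ⁿ⁾ + v₂⁽ⁿ⁾ > v₃⁽ⁿ⁾ for all n}`. -/
def F3set : Set R3 :=
  {v | v ∈ O3 ∧ ∀ n : ℕ, (FS^[n] v) 2 < (FS^[n] v) 0 + (FS^[n] v) 1}

/-- Branch index of `F` at `v`: values `0, 1, 2` encode the branches labelled `1, 2, 3`. -/
def FSidx (v : R3) : Fin 3 :=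
  if v 0 ≤ v 1 - v 0 ∧ v 1 - v 0 ≤ v 2 - v 0 then 0
  else if v 1 - v 0 < v 0 ∧ v 0 ≤ v 2 - v 0 then 1
  else 2

/-- The matrices `M₁, M₂, M₃` of the fully subtractive algorithm. -/
def Mmat : Fin 3 → Matrix (Fin 3) (Fin 3) ℤ :=
  ![!![1,0,0; 1,1,0; 1,0,1], !![0,1,0; 1,1,0; 0,1,1], !![0,0,1; 1,0,1; 0,1,1]]

def e1 : Z3 := ![1,0,0]

/-- The product `M₁ ⋯ Mₙ` of the matrices associated with the F-expansion of `v`. -/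
def prodM (v : R3) (n : ℕ) : Matrix (Fin 3) (Fin 3) ℤ :=
  ((List.range n).map (fun j => Mmat (FSidx (FS^[j] v)))).prod

/-- The translation vector `((M₁⋯Mₙ)ᵀ)⁻¹ · e₁`. -/
def transVec (v : R3) (n : ℕ) : Z3 := ((prodM v n)ᵀ)⁻¹ *ᵥ e1

/-- The sequence `Tₙ` of subsets of `ℤ³`: `T₀ = {0}`, `T_{n+1} = Tₙ ∪ (Tₙ + ((M₁⋯Mₙ)ᵀ)⁻¹·e₁)`
(so that `T₁ = {0, e₁}`, the empty matrix product being the identity). -/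
def Tseq (v : R3) : ℕ → Set Z3
  | 0 => {0}
  | n + 1 => Tseq v n ∪ ((fun x => x + transVec v n) '' Tseq v n)

-- ===== auxiliary development =====
open Filter

-- Stage 1 : basics
def unitv (m : Fin 3) : Z3 := fun n => if n = m then 1 else 0

lemma dot3_add (x y : Z3) (v : R3) : dot3 (x + y) v = dot3 x v + dot3 y v := by
  simp [dot3, add_mul, Finset.sum_add_distrib]

lemma dot3_neg (x : Z3) (v : R3) : dot3 (-x) v = - dot3 x v := by
  simp [dot3, Finset.sum_neg_distrib]

lemma dot3_sub (x y : Z3) (v : R3) : dot3 (x - y) v = dot3 x v - dot3 y v := by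
  simp [dot3, sub_mul, Finset.sum_sub_distrib]

lemma dot3_zero (v : R3) : dot3 0 v = 0 := by simp [dot3]

lemma dot3_zsmul (n : ℤ) (x : Z3) (v : R3) : dot3 (n • x) v = n * dot3 x v := by
  simp [dot3, Finset.mul_sum, mul_assoc]

lemma dot3_unitv (m : Fin 3) (v : R3) : dot3 (unitv m) v = v m := by
  fin_cases m <;> simp [dot3, unitv, Fin.sum_univ_three]

lemma adj3_iff (x y : Z3) : adj3 x y ↔ ∃ m, y = x + unitv m ∨ y = x - unitv m := by
  constructor
  · intro h
    unfold adj3 at h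
    rw [Fin.sum_univ_three] at h
    have h0 := abs_nonneg (x 0 - y 0)
    have h1 := abs_nonneg (x 1 - y 1)
    have h2 := abs_nonneg (x 2 - y 2)
    have e0 := abs_choice (x 0 - y 0)
    have e1 := abs_choice (x 1 - y 1)
    have e2 := abs_choice (x 2 - y 2)
    -- exactly one coordinate differs by ±1
    have : (y 0 = x 0 + 1 ∨ y 0 = x 0 - 1) ∧ y 1 = x 1 ∧ y 2 = x 2 ∨
           (y 1 = x 1 + 1 ∨ y 1 = x 1 - 1) ∧ y 0 = x 0 ∧ y 2 = x 2 ∨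
           (y 2 = x 2 + 1 ∨ y 2 = x 2 - 1) ∧ y 0 = x 0 ∧ y 1 = x 1 := by omega
    rcases this with ⟨h, h', h''⟩ | ⟨h, h', h''⟩ | ⟨h, h', h''⟩
    · refine ⟨0, ?_⟩
      rcases h with h | h
      · left; funext n; fin_cases n <;> simp [unitv, h, h', h'']
      · right; funext n; fin_cases n <;> simp [unitv, h, h', h'']
    · refine ⟨1, ?_⟩
      rcases h with h | h
      · left; funext n; fin_cases n <;> simp [unitv, h, h', h'']
      · right; funext n; fin_cases n <;> simp [unitv, h, h', h'']
    · refine ⟨2, ?_⟩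
      rcases h with h | h
      · left; funext n; fin_cases n <;> simp [unitv, h, h', h'']
      · right; funext n; fin_cases n <;> simp [unitv, h, h', h'']
  · rintro ⟨m, rfl | rfl⟩ <;>
      (unfold adj3; rw [Fin.sum_univ_three]; fin_cases m <;> simp [unitv])

/-- connectivity with respect to a set of moves -/
def ConnM (r : Fin 3 → Z3) (A : Set Z3) : Prop :=
  A.Nonempty ∧ ∀ x ∈ A, ∀ y ∈ A,
    Relation.ReflTransGen (fun p q => q ∈ A ∧ ∃ m, q = p + r m ∨ q = p - r m) x y

lemma connected3_iff_connM (A : Set Z3) : Connected3 A ↔ ConnM unitv A := by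
  unfold Connected3 ConnM
  have : ∀ p q : Z3, (q ∈ A ∧ adj3 p q) ↔ (q ∈ A ∧ ∃ m, q = p + unitv m ∨ q = p - unitv m) := by
    intro p q; rw [adj3_iff]
  constructor
  · rintro ⟨hne, h⟩
    refine ⟨hne, fun x hx y hy => Relation.ReflTransGen.mono (fun p q hpq => (this p q).mp hpq) _ _ (h x hx y hy)⟩
  · rintro ⟨hne, h⟩
    refine ⟨hne, fun x hx y hy => Relation.ReflTransGen.mono (fun p q hpq => (this p q).mpr hpq) _ _ (h x hx y hy)⟩

-- Stage 2
/-- moves `e_k` and `e_k + e_m` for `m ≠ k` -/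
def rmov (k : Fin 3) : Fin 3 → Z3 := fun m => if m = k then unitv k else unitv k + unitv m

lemma dot3_rmov (k m : Fin 3) (w : R3) :
    dot3 (rmov k m) w = if m = k then w k else w k + w m := by
  unfold rmov; split <;> simp [dot3_unitv, dot3_add]

lemma rmov_val_ge (k m : Fin 3) (w : R3) (hw : ∀ n, 0 ≤ w n) : w k ≤ dot3 (rmov k m) w := by
  rw [dot3_rmov]; split
  · exact le_refl _
  · linarith [hw m]

lemma plane_pos_of_nonempty {w : R3} {ω : ℝ} (h : (Plane w ω).Nonempty) : 0 < ω := by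
  obtain ⟨x, hx1, hx2⟩ := h; linarith

lemma zero_mem_plane {w : R3} {ω : ℝ} (h : 0 < ω) : (0 : Z3) ∈ Plane w ω := by
  constructor <;> simp [dot3_zero] <;> linarith

/-- the subgroup of values -/
def valgrp (w : R3) : AddSubgroup ℝ where
  carrier := Set.range (fun p : Z3 => dot3 p w)
  add_mem' := by rintro a b ⟨p, rfl⟩ ⟨q, rfl⟩; exact ⟨p + q, dot3_add p q w⟩
  zero_mem' := ⟨0, dot3_zero w⟩
  neg_mem' := by rintro a ⟨p, rfl⟩; exact ⟨-p, dot3_neg p w⟩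

lemma exists_ne_zero_mem_plane {w : R3} (hw : w ≠ 0) {ω : ℝ} (hω : 0 < ω) :
    ∃ p, p ∈ Plane w ω ∧ p ≠ 0 := by
  rcases AddSubgroup.dense_or_cyclic (valgrp w) with hd | ⟨g, hg⟩
  · obtain ⟨t, htG, ht⟩ := hd.exists_between hω
    obtain ⟨p, rfl⟩ := htG
    refine ⟨p, ⟨le_of_lt ht.1, ht.2⟩, fun h => ?_⟩
    subst h; simp only [dot3_zero] at ht; exact lt_irrefl 0 ht.1
  · have hmem : ∀ m, ∃ c : ℤ, c • g = w m := by
      intro m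
      have : w m ∈ valgrp w := ⟨unitv m, dot3_unitv m w⟩
      rw [hg, AddSubgroup.mem_closure_singleton] at this
      exact this
    choose c hc using hmem
    obtain ⟨m0, hm0⟩ : ∃ m, w m ≠ 0 := by
      by_contra h; push_neg at h; exact hw (funext h)
    set m1 : Fin 3 := if m0 = 0 then 1 else 0 with hm1def
    have hne : m1 ≠ m0 := by
      by_cases h : m0 = 0
      · subst h; simp [hm1def]
      · simp only [hm1def, if_neg h]; exact fun hh => h hh.symm
    have hval : dot3 (c m0 • unitv m1 - c m1 • unitv m0) w = 0 := by
      rw [dot3_sub, dot3_zsmul, dot3_zsmul, dot3_unitv, dot3_unitv, ← hc m0, ← hc m1]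
      simp only [zsmul_eq_mul]; ring
    refine ⟨c m0 • unitv m1 - c m1 • unitv m0, ⟨?_, ?_⟩, ?_⟩
    · rw [hval]
    · rw [hval]; exact hω
    · intro h
      have := congrFun h m1
      simp [unitv, hne] at this
      -- this : c m0 = 0
      apply hm0
      rw [← hc m0, this]; simp

-- Stage 3
lemma RTG_mem {A : Set Z3} {s : Z3 → Z3 → Prop} {x y : Z3} (hx : x ∈ A)
    (h : Relation.ReflTransGen (fun p q => q ∈ A ∧ s p q) x y) :
    Relation.ReflTransGen (fun p q => p ∈ A ∧ q ∈ A ∧ s p q) x y := by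
  induction h with
  | refl => exact .refl
  | @tail b c hs hstep ih =>
    have hb : b ∈ A := by
      rcases hs.cases_tail with h' | ⟨d, _, hd⟩
      · rwa [h']
      · exact hd.1
    exact ih.tail ⟨hb, hstep.1, hstep.2⟩

lemma unitv_apply_self (m : Fin 3) : unitv m m = 1 := by simp [unitv]
lemma unitv_apply_ne {n m : Fin 3} (h : n ≠ m) : unitv m n = 0 := by simp [unitv, h]
lemma rmov_apply_k (k m : Fin 3) : rmov k m k = 1 := by
  unfold rmov; split
  · simp [unitv]
  · rename_i h
    have : k ≠ m := fun hh => h hh.symm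
    simp [unitv, this]

/-- if the plane is connected and `z` has value in `[ω - a, a)` then everything equals `z` -/
lemma eq_of_bad {w : R3} (hw : ∀ m, 0 ≤ w m) (k : Fin 3) {ω : ℝ} {z : Z3}
    (hz : z ∈ Plane w ω) (h1 : ω - w k ≤ dot3 z w) (h2 : dot3 z w < w k)
    (hc : ConnM (rmov k) (Plane w ω)) : ∀ y ∈ Plane w ω, y = z := by
  intro y hy
  have hchain := hc.2 y hy z hz
  -- walk backwards from z: any step INTO z-adjacent... easier: chain from z to y
  have hchain' := hc.2 z hz y hy
  rcases hchain'.cases_head with h | ⟨c, hstep, _⟩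
  · exact h.symm
  · exfalso
    obtain ⟨hcB, m, rfl | rfl⟩ := hstep
    · have hv : dot3 (z + rmov k m) w = dot3 z w + dot3 (rmov k m) w := dot3_add _ _ _
      have hge : w k ≤ dot3 (rmov k m) w := by
        rw [dot3_rmov]; split
        · exact le_refl _
        · linarith [hw m]
      have := hcB.2; linarith
    · have hv : dot3 (z - rmov k m) w = dot3 z w - dot3 (rmov k m) w := dot3_sub _ _ _
      have hge : w k ≤ dot3 (rmov k m) w := by
        rw [dot3_rmov]; split
        · exact le_refl _
        · linarith [hw m]
      have := hcB.1; linarith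

lemma no_bad_of_connR {w : R3} (hw : ∀ m, 0 ≤ w m) (k : Fin 3) {ω : ℝ}
    (hc : ConnM (rmov k) (Plane w ω)) :
    w k < ω ∧ ∀ z : Z3, ¬ (ω - w k ≤ dot3 z w ∧ dot3 z w < w k) := by
  have hω : 0 < ω := plane_pos_of_nonempty hc.1
  have h0 : (0 : Z3) ∈ Plane w ω := zero_mem_plane hω
  have hwne : w k ≠ 0 → w ≠ 0 := fun h hh => h (by rw [hh]; rfl)
  have hka : w k < ω := by
    by_contra hka
    push_neg at hka   -- ω ≤ w k
    have hk0 : w k ≠ 0 := by intro h; rw [h] at hka; linarith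
    obtain ⟨p, hp, hpne⟩ := exists_ne_zero_mem_plane (hwne hk0) hω
    have h1 : ω - w k ≤ dot3 (0:Z3) w := by rw [dot3_zero]; linarith
    have h2 : dot3 (0:Z3) w < w k := by rw [dot3_zero]; linarith [hω]
    exact hpne (eq_of_bad hw k h0 h1 h2 hc p hp)
  refine ⟨hka, ?_⟩
  rintro z ⟨h1, h2⟩
  have hk0 : w k ≠ 0 := by
    intro h; rw [h] at h2
    have : (0:ℝ) ≤ dot3 z w := by rw [h] at h1; linarith
    linarith
  have hzB : z ∈ Plane w ω := ⟨by linarith, by linarith⟩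
  obtain ⟨p, hp, hpne⟩ := exists_ne_zero_mem_plane (hwne hk0) hω
  have e1 := eq_of_bad hw k hzB h1 h2 hc p hp
  have e2 := eq_of_bad hw k hzB h1 h2 hc 0 h0
  exact hpne (by rw [e1, ← e2])

lemma disconn_of_bad {w : R3} (hw : ∀ m, 0 ≤ w m) (k : Fin 3) {ω : ℝ} (hk : w k < ω)
    {z : Z3} (h1 : ω - w k ≤ dot3 z w) (h2 : dot3 z w < w k) :
    ¬ ConnM unitv (Plane w (ω - w k)) := by
  intro hc
  have hW : 0 < ω - w k := by linarith
  have hWa : ω - w k < w k := lt_of_le_of_lt h1 h2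
  have ha : 0 < w k := lt_trans hW hWa
  have h0A : (0:Z3) ∈ Plane w (ω - w k) := zero_mem_plane hW
  -- every point of the thin plane has k-th coordinate 0
  have coset : ∀ p ∈ Plane w (ω - w k), p k = 0 := by
    intro p hp
    have chain := RTG_mem h0A (hc.2 0 h0A p hp)
    clear hp
    induction chain with
    | refl => rfl
    | @tail b c hs hstep ih =>
      obtain ⟨hbA, hcA, m, hmov⟩ := hstep
      by_cases hmk : m = k
      · exfalso
        subst hmk
        rcases hmov with rfl | rfl
        · have hv : dot3 (b + unitv m) w = dot3 b w + w m := by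
            rw [dot3_add, dot3_unitv]
          have hA := hcA.2; have hB := hbA.1
          rw [hv] at hA; linarith
        · have hv : dot3 (b - unitv m) w = dot3 b w - w m := by
            rw [dot3_sub, dot3_unitv]
          have hA := hcA.1; have hB := hbA.2
          rw [hv] at hA; linarith
      · have hkm : k ≠ m := fun h => hmk h.symm
        rcases hmov with rfl | rfl
        · have : (b + unitv m) k = b k := by simp [unitv_apply_ne hkm]
          rw [this, ih]
        · have : (b - unitv m) k = b k := by simp [unitv_apply_ne hkm]
          rw [this, ih]
  set β := dot3 z w with hβdef
  set u : Z3 := z - (z k) • unitv k with hudef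
  have huk : u k = 0 := by simp [hudef, unitv_apply_self]
  set γ := dot3 u w with hγdef
  have hγ : γ = β - (z k : ℝ) * w k := by
    rw [hγdef, hudef, dot3_sub, dot3_zsmul, dot3_unitv, hβdef]
  have hγne : γ ≠ 0 := by
    intro h
    rw [h] at hγ
    have hβa : β = (z k : ℝ) * w k := by linarith
    rcases le_or_gt (z k) 0 with hz | hz
    · have : (z k : ℝ) ≤ 0 := by exact_mod_cast hz
      nlinarith
    · have : (1 : ℝ) ≤ (z k : ℝ) := by exact_mod_cast hz
      nlinarith
  have main : ∀ q m : ℤ, m ≠ 0 → 0 ≤ (q:ℝ) * γ + (m:ℝ) * w k →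
      (q:ℝ) * γ + (m:ℝ) * w k < ω - w k → False := by
    intro q m hm hge hlt
    have hval : dot3 (q • u + m • unitv k) w = (q:ℝ) * γ + (m:ℝ) * w k := by
      rw [dot3_add, dot3_zsmul, dot3_zsmul, dot3_unitv, hγdef]
    have hmem : (q • u + m • unitv k) ∈ Plane w (ω - w k) :=
      ⟨by rw [hval]; exact hge, by rw [hval]; exact hlt⟩
    have hcs := coset _ hmem
    have hco : (q • u + m • unitv k) k = m := by
      simp [huk, unitv_apply_self]
    rw [hco] at hcs
    exact hm hcs
  -- the subgroup generated by γ and w k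
  set Γ : AddSubgroup ℝ :=
    { carrier := {t | ∃ q m : ℤ, t = (q:ℝ) * γ + (m:ℝ) * w k}
      add_mem' := by
        rintro s t ⟨q1, m1, rfl⟩ ⟨q2, m2, rfl⟩
        exact ⟨q1 + q2, m1 + m2, by push_cast; ring⟩
      zero_mem' := ⟨0, 0, by simp⟩
      neg_mem' := by
        rintro s ⟨q1, m1, rfl⟩
        exact ⟨-q1, -m1, by push_cast; ring⟩ } with hΓdef
  rcases AddSubgroup.dense_or_cyclic Γ with hd | ⟨g, hg⟩
  · -- dense case
    obtain ⟨η, hηΓ, hη1, hη2⟩ := hd.exists_between (show w k - (ω - w k) < w k by linarith)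
    obtain ⟨q, m, rfl⟩ := hηΓ
    by_cases hm1 : m = 1
    · -- σ := -(q γ) ∈ (0, W)
      subst hm1
      set σ : ℝ := -((q:ℝ) * γ) with hσdef
      have hσ1 : 0 < σ := by push_cast at hη2 ⊢; nlinarith [hη2]
      have hσ2 : σ < ω - w k := by push_cast at hη1 ⊢; nlinarith [hη1]
      have hQex : ∃ n : ℕ, w k - (ω - w k) < n * σ := by
        obtain ⟨n, hn⟩ := exists_nat_gt ((w k - (ω - w k)) / σ)
        exact ⟨n, by rwa [div_lt_iff₀ hσ1] at hn⟩
      set n0 := Nat.find hQex with hn0def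
      have hn0 : w k - (ω - w k) < n0 * σ := Nat.find_spec hQex
      have hn0ne : n0 ≠ 0 := by
        intro h
        rw [h] at hn0; push_cast at hn0; linarith
      have hmin : ¬ (w k - (ω - w k) < (n0 - 1 : ℕ) * σ) :=
        Nat.find_min hQex (Nat.sub_lt (Nat.pos_of_ne_zero hn0ne) one_pos)
      push_neg at hmin
      have hcast : ((n0 - 1 : ℕ) : ℝ) = (n0 : ℝ) - 1 := by
        have : 1 ≤ n0 := Nat.pos_of_ne_zero hn0ne
        push_cast [Nat.cast_sub this]; ring
      rw [hcast] at hmin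
      have hup : (n0:ℝ) * σ < w k := by nlinarith
      refine main ((n0:ℤ) * q) 1 one_ne_zero ?_ ?_
      · push_cast
        nlinarith [hup]
      · push_cast
        nlinarith [hn0]
    · refine main (-q) (1 - m) (by omega) ?_ ?_
      · push_cast; nlinarith [hη2]
      · push_cast; nlinarith [hη1]
  · -- cyclic case
    have hγΓ : γ ∈ Γ := ⟨1, 0, by push_cast; ring⟩
    have haΓ : w k ∈ Γ := ⟨0, 1, by push_cast; ring⟩
    rw [hg, AddSubgroup.mem_closure_singleton] at hγΓ haΓ
    obtain ⟨P, hP⟩ := hγΓ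
    obtain ⟨N, hN⟩ := haΓ
    have hPne : P ≠ 0 := by
      intro h; rw [h] at hP; simp at hP; exact hγne hP.symm
    have hval0 : (N:ℝ) * γ + ((-P : ℤ):ℝ) * w k = 0 := by
      rw [← hP, ← hN]; push_cast [zsmul_eq_mul]; ring
    refine main N (-P) (by omega) ?_ ?_
    · rw [hval0]
    · rw [hval0]; linarith

lemma rmov_self (k : Fin 3) : rmov k k = unitv k := by simp [rmov]
lemma rmov_ne {k m : Fin 3} (h : m ≠ k) : rmov k m = unitv k + unitv m := by simp [rmov, h]

lemma RTG_convert_map {relS relT : Z3 → Z3 → Prop} (g : Z3 → Z3) {x y : Z3}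
    (h : Relation.ReflTransGen relS x y)
    (conv : ∀ b c, relS b c → Relation.ReflTransGen relT (g b) (g c)) :
    Relation.ReflTransGen relT (g x) (g y) := by
  induction h with
  | refl => exact .refl
  | tail hs hstep ih => exact ih.trans (conv _ _ hstep)

lemma RTG_convert {relS relT : Z3 → Z3 → Prop} {x y : Z3} (h : Relation.ReflTransGen relS x y)
    (conv : ∀ b c, relS b c → Relation.ReflTransGen relT b c) :
    Relation.ReflTransGen relT x y := by
  induction h with
  | refl => exact .refl
  | tail hs hstep ih => exact ih.trans (conv _ _ hstep)

lemma connR_to_connU {w : R3} (hw : ∀ m, 0 ≤ w m) (k : Fin 3) {ω : ℝ}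
    (hc : ConnM (rmov k) (Plane w ω)) : ConnM unitv (Plane w (ω - w k)) := by
  obtain ⟨hka, hnb⟩ := no_bad_of_connR hw k hc
  have hW : 0 < ω - w k := by linarith
  have hhigh : ∀ p : Z3, p ∈ Plane w ω → ¬ (dot3 p w < ω - w k) → w k ≤ dot3 p w := by
    intro p hp hlow
    push_neg at hlow
    by_contra hh; push_neg at hh
    exact hnb p ⟨hlow, hh⟩
  classical
  set g : Z3 → Z3 := fun p => if dot3 p w < ω - w k then p else p - unitv k with hgdef
  have hgval : ∀ p, dot3 (p - unitv k) w = dot3 p w - w k := by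
    intro p; rw [dot3_sub, dot3_unitv]
  have hgmem : ∀ p, p ∈ Plane w ω → g p ∈ Plane w (ω - w k) := by
    intro p hp
    by_cases hl : dot3 p w < ω - w k
    · simp only [hgdef, if_pos hl]; exact ⟨hp.1, hl⟩
    · simp only [hgdef, if_neg hl]
      have h2 := hhigh p hp hl
      push_neg at hl
      exact ⟨by rw [hgval]; linarith, by rw [hgval]; linarith [hp.2]⟩
  have step_conv : ∀ b c : Z3, b ∈ Plane w ω → c ∈ Plane w ω →
      (∃ m, c = b + rmov k m ∨ c = b - rmov k m) →
      Relation.ReflTransGen (fun p q => q ∈ Plane w (ω - w k) ∧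
        ∃ m, q = p + unitv m ∨ q = p - unitv m) (g b) (g c) := by
    rintro b c hb hcm ⟨m, hmv | hmv⟩ <;> by_cases hmk : m = k
    · -- c = b + unitv k
      subst hmk
      rw [rmov_self] at hmv
      have hv : dot3 c w = dot3 b w + w m := by rw [hmv, dot3_add, dot3_unitv]
      by_cases hbl : dot3 b w < ω - w m
      · by_cases hcl : dot3 c w < ω - w m
        · simp only [hgdef, if_pos hbl, if_pos hcl]
          exact .single ⟨⟨hcm.1, hcl⟩, m, Or.inl hmv⟩
        · simp only [hgdef, if_pos hbl, if_neg hcl]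
          have e : c - unitv m = b := by rw [hmv]; abel
          rw [e]
      · exfalso; push_neg at hbl; linarith [hcm.2]
    · -- c = b + (unitv k + unitv m)
      rw [rmov_ne hmk] at hmv
      have hv : dot3 c w = dot3 b w + (w k + w m) := by
        rw [hmv, dot3_add, dot3_add, dot3_unitv, dot3_unitv]; try ring
      by_cases hbl : dot3 b w < ω - w k
      · by_cases hcl : dot3 c w < ω - w k
        · simp only [hgdef, if_pos hbl, if_pos hcl]
          have hmid : (b + unitv k) ∈ Plane w (ω - w k) := by
            have hvm : dot3 (b + unitv k) w = dot3 b w + w k := by rw [dot3_add, dot3_unitv]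
            exact ⟨by rw [hvm]; linarith [hb.1, hw k], by rw [hvm]; linarith [hw m]⟩
          refine Relation.ReflTransGen.head ⟨hmid, k, Or.inl rfl⟩
            (.single ⟨⟨hcm.1, hcl⟩, m, Or.inl ?_⟩)
          rw [hmv]; abel
        · simp only [hgdef, if_pos hbl, if_neg hcl]
          have hck := hhigh c hcm hcl
          refine .single ⟨⟨by rw [hgval]; linarith, by rw [hgval]; linarith [hcm.2]⟩, m, Or.inl ?_⟩
          rw [hmv]; abel
      · exfalso; push_neg at hbl; linarith [hcm.2, hw m]
    · -- c = b - unitv k : c is always low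
      subst hmk
      rw [rmov_self] at hmv
      have hv : dot3 c w = dot3 b w - w m := by rw [hmv, dot3_sub, dot3_unitv]
      have hcl : dot3 c w < ω - w m := by linarith [hb.2]
      by_cases hbl : dot3 b w < ω - w m
      · simp only [hgdef, if_pos hbl, if_pos hcl]
        exact .single ⟨⟨hcm.1, hcl⟩, m, Or.inr hmv⟩
      · simp only [hgdef, if_neg hbl, if_pos hcl]
        rw [← hmv]
    · -- c = b - (unitv k + unitv m) : c is always low
      rw [rmov_ne hmk] at hmv
      have hv : dot3 c w = dot3 b w - (w k + w m) := by
        rw [hmv, dot3_sub, dot3_add, dot3_unitv, dot3_unitv]; try ring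
      have hcl : dot3 c w < ω - w k := by linarith [hb.2, hw m]
      by_cases hbl : dot3 b w < ω - w k
      · simp only [hgdef, if_pos hbl, if_pos hcl]
        have hmid : (b - unitv m) ∈ Plane w (ω - w k) := by
          have hvm : dot3 (b - unitv m) w = dot3 b w - w m := by rw [dot3_sub, dot3_unitv]
          exact ⟨by rw [hvm]; linarith [hcm.1, hw k], by rw [hvm]; linarith [hw m, hb.2]⟩
        refine Relation.ReflTransGen.head ⟨hmid, m, Or.inr rfl⟩
          (.single ⟨⟨hcm.1, hcl⟩, k, Or.inr ?_⟩)
        rw [hmv]; abel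
      · simp only [hgdef, if_neg hbl, if_pos hcl]
        refine .single ⟨⟨hcm.1, hcl⟩, m, Or.inr ?_⟩
        rw [hmv]; abel
  refine ⟨⟨0, zero_mem_plane hW⟩, fun x hx y hy => ?_⟩
  have hxB : x ∈ Plane w ω := ⟨hx.1, by linarith [hx.2, hw k]⟩
  have hyB : y ∈ Plane w ω := ⟨hy.1, by linarith [hy.2, hw k]⟩
  have chain := RTG_mem hxB (hc.2 x hxB y hyB)
  have hgx : g x = x := by simp only [hgdef, if_pos hx.2]
  have hgy : g y = y := by simp only [hgdef, if_pos hy.2]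
  have main := RTG_convert_map g chain (fun b c h => step_conv b c h.1 h.2.1 h.2.2)
  rwa [hgx, hgy] at main

lemma connU_to_connR {w : R3} (hw : ∀ m, 0 ≤ w m) (k : Fin 3) {ω : ℝ}
    (hc : ConnM unitv (Plane w (ω - w k))) : ConnM (rmov k) (Plane w ω) := by
  have hW : 0 < ω - w k := plane_pos_of_nonempty hc.1
  have hω : 0 < ω := by linarith [hw k]
  have hnb : ∀ z : Z3, ¬ (ω - w k ≤ dot3 z w ∧ dot3 z w < w k) := by
    intro z hz
    exact disconn_of_bad hw k (by linarith [hw k]) hz.1 hz.2 hc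
  have hhigh : ∀ p : Z3, p ∈ Plane w ω → ¬ (dot3 p w < ω - w k) → w k ≤ dot3 p w := by
    intro p hp hlow
    push_neg at hlow
    by_contra hh; push_neg at hh
    exact hnb p ⟨hlow, hh⟩
  classical
  set g : Z3 → Z3 := fun p => if dot3 p w < ω - w k then p else p - unitv k with hgdef
  have hgval : ∀ p, dot3 (p - unitv k) w = dot3 p w - w k := by
    intro p; rw [dot3_sub, dot3_unitv]
  have hgmem : ∀ p, p ∈ Plane w ω → g p ∈ Plane w (ω - w k) := by
    intro p hp
    by_cases hl : dot3 p w < ω - w k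
    · simp only [hgdef, if_pos hl]; exact ⟨hp.1, hl⟩
    · simp only [hgdef, if_neg hl]
      have h2 := hhigh p hp hl
      push_neg at hl
      exact ⟨by rw [hgval]; linarith, by rw [hgval]; linarith [hp.2]⟩
  have hAB : ∀ p, p ∈ Plane w (ω - w k) → p ∈ Plane w ω :=
    fun p hp => ⟨hp.1, by linarith [hp.2, hw k]⟩
  have step_conv : ∀ b c : Z3, b ∈ Plane w (ω - w k) → c ∈ Plane w (ω - w k) →
      (∃ m, c = b + unitv m ∨ c = b - unitv m) →
      Relation.ReflTransGen (fun p q => q ∈ Plane w ω ∧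
        ∃ m, q = p + rmov k m ∨ q = p - rmov k m) b c := by
    rintro b c hb hcm ⟨m, hmv | hmv⟩ <;> by_cases hmk : m = k
    · subst hmk
      refine .single ⟨hAB c hcm, m, Or.inl ?_⟩
      rw [rmov_self, hmv]
    · -- c = b + unitv m, m ≠ k : up by rmov k m then down by e_k
      have hvc : dot3 c w = dot3 b w + w m := by rw [hmv, dot3_add, dot3_unitv]
      have hmid : (b + rmov k m) ∈ Plane w ω := by
        have : dot3 (b + rmov k m) w = dot3 b w + (w k + w m) := by
          rw [dot3_add, dot3_rmov, if_neg hmk]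
        exact ⟨by rw [this]; linarith [hb.1, hw k, hw m], by rw [this]; linarith [hcm.2]⟩
      refine Relation.ReflTransGen.head ⟨hmid, m, Or.inl rfl⟩ (.single ⟨hAB c hcm, k, Or.inr ?_⟩)
      rw [hmv, rmov_self, rmov_ne hmk]; abel
    · subst hmk
      refine .single ⟨hAB c hcm, m, Or.inr ?_⟩
      rw [rmov_self, hmv]
    · -- c = b - unitv m, m ≠ k : up by e_k then down by rmov k m
      have hvc : dot3 c w = dot3 b w - w m := by rw [hmv, dot3_sub, dot3_unitv]
      have hmid : (b + unitv k) ∈ Plane w ω := by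
        have : dot3 (b + unitv k) w = dot3 b w + w k := by rw [dot3_add, dot3_unitv]
        exact ⟨by rw [this]; linarith [hb.1, hw k], by rw [this]; linarith [hb.2]⟩
      refine Relation.ReflTransGen.head ⟨hmid, k, Or.inl (by rw [rmov_self])⟩
        (.single ⟨hAB c hcm, m, Or.inr ?_⟩)
      rw [hmv, rmov_ne hmk]; abel
  have reach : ∀ p, p ∈ Plane w ω → Relation.ReflTransGen (fun p q => q ∈ Plane w ω ∧
      ∃ m, q = p + rmov k m ∨ q = p - rmov k m) p (g p) := by
    intro p hp
    by_cases hl : dot3 p w < ω - w k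
    · simp only [hgdef, if_pos hl]
      exact .refl
    · simp only [hgdef, if_neg hl]
      exact .single ⟨hAB _ (by simpa only [hgdef, if_neg hl] using hgmem p hp), k,
        Or.inr (by rw [rmov_self])⟩
  have reach2 : ∀ p, p ∈ Plane w ω → Relation.ReflTransGen (fun p q => q ∈ Plane w ω ∧
      ∃ m, q = p + rmov k m ∨ q = p - rmov k m) (g p) p := by
    intro p hp
    by_cases hl : dot3 p w < ω - w k
    · simp only [hgdef, if_pos hl]
      exact .refl
    · simp only [hgdef, if_neg hl]
      exact .single ⟨hp, k, Or.inl (by rw [rmov_self]; abel)⟩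
  refine ⟨⟨0, zero_mem_plane hω⟩, fun x hx y hy => ?_⟩
  have hgx := hgmem x hx
  have hgy := hgmem y hy
  have chain := RTG_mem hgx (hc.2 (g x) hgx (g y) hgy)
  have main : Relation.ReflTransGen (fun p q => q ∈ Plane w ω ∧
      ∃ m, q = p + rmov k m ∨ q = p - rmov k m) (g x) (g y) :=
    RTG_convert chain (fun b c h => step_conv b c h.1 h.2.1 h.2.2)
  exact ((reach x hx).trans main).trans (reach2 y hy)

lemma LKEY {w : R3} (hw : ∀ m, 0 ≤ w m) (k : Fin 3) (ω : ℝ) :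
    ConnM (rmov k) (Plane w ω) ↔ ConnM unitv (Plane w (ω - w k)) :=
  ⟨connR_to_connU hw k, connU_to_connR hw k⟩

-- Stage 4
lemma connM_of_map' (r r' : Fin 3 → Z3) (A A' : Set Z3) (φ : Z3 → Z3) (σ : Fin 3 → Fin 3)
    (hmem : ∀ x, x ∈ A ↔ φ x ∈ A') (hsurj : ∀ y ∈ A', ∃ x ∈ A, φ x = y)
    (hstep : ∀ p (m : Fin 3), φ (p + r m) = φ p + r' (σ m))
    (hstepm : ∀ p (m : Fin 3), φ (p - r m) = φ p - r' (σ m)) :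
    ConnM r A → ConnM r' A' := by
  rintro ⟨⟨x0, hx0⟩, h⟩
  refine ⟨⟨φ x0, (hmem x0).mp hx0⟩, fun y1 hy1 y2 hy2 => ?_⟩
  obtain ⟨x1, hx1, rfl⟩ := hsurj y1 hy1
  obtain ⟨x2, hx2, rfl⟩ := hsurj y2 hy2
  refine (h x1 hx1 x2 hx2).lift (r := fun p q => q ∈ A ∧ ∃ m, q = p + r m ∨ q = p - r m) φ ?_
  rintro p q ⟨hq, m, rfl | rfl⟩
  · exact ⟨(hmem _).mp hq, σ m, Or.inl (hstep p m)⟩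
  · exact ⟨(hmem _).mp hq, σ m, Or.inr (hstepm p m)⟩

lemma connM_iff_of_equiv (r r' : Fin 3 → Z3) (A A' : Set Z3) (φ ψ : Z3 → Z3)
    (σ τ : Fin 3 → Fin 3)
    (hφψ : ∀ y, φ (ψ y) = y) (hψφ : ∀ x, ψ (φ x) = x)
    (hmem : ∀ x, x ∈ A ↔ φ x ∈ A')
    (hstep : ∀ p m, φ (p + r m) = φ p + r' (σ m))
    (hstepm : ∀ p m, φ (p - r m) = φ p - r' (σ m))
    (hstep' : ∀ p m, ψ (p + r' m) = ψ p + r (τ m))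
    (hstepm' : ∀ p m, ψ (p - r' m) = ψ p - r (τ m)) :
    ConnM r A ↔ ConnM r' A' := by
  have hmem' : ∀ y, y ∈ A' ↔ ψ y ∈ A := by
    intro y
    rw [hmem (ψ y), hφψ]
  constructor
  · exact connM_of_map' r r' A A' φ σ hmem
      (fun y hy => ⟨ψ y, (hmem' y).mp hy, hφψ y⟩) hstep hstepm
  · exact connM_of_map' r' r A' A ψ τ hmem'
      (fun x hx => ⟨φ x, (hmem x).mp hx, hψφ x⟩) hstep' hstepm'

def phi1 : Z3 → Z3 := fun x => ![x 0 + x 1 + x 2, x 1, x 2]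
def psi1 : Z3 → Z3 := fun y => ![y 0 - y 1 - y 2, y 1, y 2]
def phi2 : Z3 → Z3 := fun x => ![x 1, x 0 + x 1 + x 2, x 2]
def psi2 : Z3 → Z3 := fun y => ![y 1 - y 0 - y 2, y 0, y 2]
def phi3 : Z3 → Z3 := fun x => ![x 1, x 2, x 0 + x 1 + x 2]
def psi3 : Z3 → Z3 := fun y => ![y 2 - y 0 - y 1, y 0, y 1]

lemma part1 (v : R3) (hv : v ∈ O3) (ω : ℝ) :
    Connected3 (Plane v ω) ↔ Connected3 (Plane (FS v) (ω - v 0)) := by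
  obtain ⟨h0, h01, h12⟩ := hv
  rw [connected3_iff_connM, connected3_iff_connM]
  by_cases hb1 : v 0 ≤ v 1 - v 0 ∧ v 1 - v 0 ≤ v 2 - v 0
  · have hFS : FS v = ![v 0, v 1 - v 0, v 2 - v 0] := by rw [FS, if_pos hb1]
    have hw : ∀ m, 0 ≤ FS v m := by
      intro m; rw [hFS]; fin_cases m <;> simp <;> linarith [hb1.1, hb1.2]
    have hwk : FS v 0 = v 0 := by rw [hFS]; simp
    have e1 : ConnM unitv (Plane v ω) ↔ ConnM (rmov 0) (Plane (FS v) ω) := by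
      apply connM_iff_of_equiv unitv (rmov 0) _ _ phi1 psi1 id id
      · intro y; funext n; fin_cases n <;> simp [phi1, psi1] <;> ring
      · intro x; funext n; fin_cases n <;> simp [phi1, psi1] <;> ring
      · intro x
        have : dot3 (phi1 x) (FS v) = dot3 x v := by
          rw [hFS]; simp [dot3, phi1, Fin.sum_univ_three]; push_cast; ring
        simp only [Plane, Set.mem_setOf_eq, this]
      · intro p m; funext n; fin_cases m <;> fin_cases n <;>
          simp [phi1, unitv, rmov] <;> ring
      · intro p m; funext n; fin_cases m <;> fin_cases n <;>
          simp [phi1, unitv, rmov] <;> ring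
      · intro p m; funext n; fin_cases m <;> fin_cases n <;>
          simp [psi1, unitv, rmov] <;> ring
      · intro p m; funext n; fin_cases m <;> fin_cases n <;>
          simp [psi1, unitv, rmov] <;> ring
    rw [e1, show ω - v 0 = ω - FS v 0 from by rw [hwk]]
    exact LKEY hw 0 ω
  · by_cases hb2 : v 1 - v 0 < v 0 ∧ v 0 ≤ v 2 - v 0
    · have hFS : FS v = ![v 1 - v 0, v 0, v 2 - v 0] := by rw [FS, if_neg hb1, if_pos hb2]
      have hw : ∀ m, 0 ≤ FS v m := by
        intro m; rw [hFS]; fin_cases m <;> simp <;> linarith [hb2.1, hb2.2]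
      have hwk : FS v 1 = v 0 := by rw [hFS]; simp
      have e1 : ConnM unitv (Plane v ω) ↔ ConnM (rmov 1) (Plane (FS v) ω) := by
        apply connM_iff_of_equiv unitv (rmov 1) _ _ phi2 psi2 ![1,0,2] ![1,0,2]
        · intro y; funext n; fin_cases n <;> simp [phi2, psi2] <;> ring
        · intro x; funext n; fin_cases n <;> simp [phi2, psi2] <;> ring
        · intro x
          have : dot3 (phi2 x) (FS v) = dot3 x v := by
            rw [hFS]; simp [dot3, phi2, Fin.sum_univ_three]; push_cast; ring
          simp only [Plane, Set.mem_setOf_eq, this]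
        · intro p m; funext n; fin_cases m <;> fin_cases n <;>
            simp [phi2, unitv, rmov] <;> ring
        · intro p m; funext n; fin_cases m <;> fin_cases n <;>
            simp [phi2, unitv, rmov] <;> ring
        · intro p m; funext n; fin_cases m <;> fin_cases n <;>
            simp [psi2, unitv, rmov] <;> ring
        · intro p m; funext n; fin_cases m <;> fin_cases n <;>
            simp [psi2, unitv, rmov] <;> ring
      rw [e1, show ω - v 0 = ω - FS v 1 from by rw [hwk]]
      exact LKEY hw 1 ω
    · have hFS : FS v = ![v 1 - v 0, v 2 - v 0, v 0] := by rw [FS, if_neg hb1, if_neg hb2]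
      have hb1' : v 1 - v 0 < v 0 := by
        by_contra hh; push_neg at hh; exact hb1 ⟨hh, by linarith⟩
      have hb2' : v 2 - v 0 < v 0 := by
        by_contra hh; push_neg at hh; exact hb2 ⟨hb1', hh⟩
      have hw : ∀ m, 0 ≤ FS v m := by
        intro m; rw [hFS]; fin_cases m <;> simp <;> linarith
      have hwk : FS v 2 = v 0 := by rw [hFS]; simp
      have e1 : ConnM unitv (Plane v ω) ↔ ConnM (rmov 2) (Plane (FS v) ω) := by
        apply connM_iff_of_equiv unitv (rmov 2) _ _ phi3 psi3 ![2,0,1] ![1,2,0]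
        · intro y; funext n; fin_cases n <;> simp [phi3, psi3] <;> ring
        · intro x; funext n; fin_cases n <;> simp [phi3, psi3] <;> ring
        · intro x
          have : dot3 (phi3 x) (FS v) = dot3 x v := by
            rw [hFS]; simp [dot3, phi3, Fin.sum_univ_three]; push_cast; ring
          simp only [Plane, Set.mem_setOf_eq, this]
        · intro p m; funext n; fin_cases m <;> fin_cases n <;>
            simp [phi3, unitv, rmov] <;> ring
        · intro p m; funext n; fin_cases m <;> fin_cases n <;>
            simp [phi3, unitv, rmov] <;> ring
        · intro p m; funext n; fin_cases m <;> fin_cases n <;>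
            simp [psi3, unitv, rmov] <;> ring
        · intro p m; funext n; fin_cases m <;> fin_cases n <;>
            simp [psi3, unitv, rmov] <;> ring
      rw [e1, show ω - v 0 = ω - FS v 2 from by rw [hwk]]
      exact LKEY hw 2 ω

-- Stage 5a
lemma fin3_cases (j : Fin 3) : j = 0 ∨ j = 1 ∨ j = 2 := by
  rcases j with ⟨jv, hjv⟩
  interval_cases jv <;> simp
lemma adj3_symm {x y : Z3} (h : adj3 x y) : adj3 y x := by
  unfold adj3 at h ⊢
  simpa [abs_sub_comm] using h

lemma RTG_reverse {A : Set Z3} {x y : Z3} (hx : x ∈ A)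
    (h : Relation.ReflTransGen (fun a b => b ∈ A ∧ adj3 a b) x y) :
    Relation.ReflTransGen (fun a b => b ∈ A ∧ adj3 a b) y x := by
  induction h with
  | refl => exact .refl
  | @tail b c hs hstep ih =>
    have hb : b ∈ A := by
      rcases hs.cases_tail with h' | ⟨d, _, hd⟩
      · rwa [h']
      · exact hd.1
    exact (Relation.ReflTransGen.single ⟨hb, adj3_symm hstep.2⟩).trans ih

lemma conn_to_zero (u : R3) (hu : ∀ m, 0 ≤ u m) (ω : ℝ) (hω : 0 < ω)
    (hT : 2 * (u 0 + u 1 + u 2) ≤ ω) :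
    ∀ n : ℕ, ∀ x ∈ Plane u ω, (|x 0| + |x 1| + |x 2| : ℤ) ≤ n →
      Relation.ReflTransGen (fun a b => b ∈ Plane u ω ∧ adj3 a b) x 0 := by
  intro n
  induction n with
  | zero =>
    intro x _ hsum
    have h0 : x = 0 := by
      have h0 := abs_nonneg (x 0); have h1 := abs_nonneg (x 1); have h2 := abs_nonneg (x 2)
      have e0 : x 0 = 0 := abs_eq_zero.mp (by omega)
      have e1 : x 1 = 0 := abs_eq_zero.mp (by omega)
      have e2 : x 2 = 0 := abs_eq_zero.mp (by omega)
      funext i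
      rcases fin3_cases i with rfl | rfl | rfl
      · exact e0
      · exact e1
      · exact e2
    rw [h0]
  | succ n ih =>
    intro x hx hsum
    by_cases hxz : x = 0
    · rw [hxz]
    · have hval : dot3 x u = (x 0 : ℝ) * u 0 + (x 1 : ℝ) * u 1 + (x 2 : ℝ) * u 2 := by
        simp [dot3, Fin.sum_univ_three]
      have hμ0 := hx.1
      have hμω := hx.2
      -- find a good move
      have hgood : ∃ m, ((0:ℤ) < x m ∧ u m ≤ dot3 x u) ∨ (x m < 0 ∧ dot3 x u + u m < ω) := by
        by_cases hall : ∀ m, 0 ≤ x m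
        · obtain ⟨m, hm⟩ : ∃ m, 0 < x m := by
            by_contra hc; push_neg at hc
            apply hxz
            funext i
            have : ∀ j, x j = 0 := fun j => le_antisymm (hc j) (hall j)
            fin_cases i <;> exact this _
          refine ⟨m, Or.inl ⟨hm, ?_⟩⟩
          have c0 : (0:ℝ) ≤ (x 0 : ℝ) := by exact_mod_cast hall 0
          have c1 : (0:ℝ) ≤ (x 1 : ℝ) := by exact_mod_cast hall 1
          have c2 : (0:ℝ) ≤ (x 2 : ℝ) := by exact_mod_cast hall 2
          rw [hval]
          rcases fin3_cases m with rfl | rfl | rfl <;>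
            [ (have cm : (1:ℝ) ≤ (x 0 : ℝ) := by exact_mod_cast hm);
              (have cm : (1:ℝ) ≤ (x 1 : ℝ) := by exact_mod_cast hm);
              (have cm : (1:ℝ) ≤ (x 2 : ℝ) := by exact_mod_cast hm)] <;>
            nlinarith [mul_nonneg c0 (hu 0), mul_nonneg c1 (hu 1), mul_nonneg c2 (hu 2),
              mul_le_mul_of_nonneg_right cm (hu 0), mul_le_mul_of_nonneg_right cm (hu 1),
              mul_le_mul_of_nonneg_right cm (hu 2)]
        · push_neg at hall
          obtain ⟨m0, hm0⟩ := hall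
          by_cases hov : dot3 x u + u m0 < ω
          · exact ⟨m0, Or.inr ⟨hm0, hov⟩⟩
          · push_neg at hov
            have hTum : u m0 ≤ u 0 + u 1 + u 2 := by
              rcases fin3_cases m0 with rfl | rfl | rfl <;> linarith [hu 0, hu 1, hu 2]
            have hμT : u 0 + u 1 + u 2 ≤ dot3 x u := by linarith
            obtain ⟨m1, hm1⟩ : ∃ m, 0 < x m := by
              by_contra hc; push_neg at hc
              have c0 : (x 0 : ℝ) ≤ 0 := by exact_mod_cast hc 0
              have c1 : (x 1 : ℝ) ≤ 0 := by exact_mod_cast hc 1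
              have c2 : (x 2 : ℝ) ≤ 0 := by exact_mod_cast hc 2
              have hμle : dot3 x u ≤ 0 := by
                rw [hval]
                nlinarith [mul_nonpos_of_nonpos_of_nonneg c0 (hu 0),
                  mul_nonpos_of_nonpos_of_nonneg c1 (hu 1),
                  mul_nonpos_of_nonpos_of_nonneg c2 (hu 2)]
              have hT0 : u 0 + u 1 + u 2 ≤ 0 := le_trans hμT hμle
              have hm0T : u m0 ≤ u 0 + u 1 + u 2 := by
                rcases fin3_cases m0 with rfl | rfl | rfl <;> linarith [hu 0, hu 1, hu 2]
              have : u m0 = 0 := le_antisymm (by linarith) (hu m0)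
              rw [this] at hov
              linarith
            refine ⟨m1, Or.inl ⟨hm1, ?_⟩⟩
            have : u m1 ≤ u 0 + u 1 + u 2 := by
              rcases fin3_cases m1 with rfl | rfl | rfl <;> linarith [hu 0, hu 1, hu 2]
            linarith
      obtain ⟨m, hm⟩ := hgood
      rcases hm with ⟨hpos, hvge⟩ | ⟨hneg, hvlt⟩
      · -- step down in coordinate m
        have hmem : (x - unitv m) ∈ Plane u ω := by
          have : dot3 (x - unitv m) u = dot3 x u - u m := by rw [dot3_sub, dot3_unitv]
          exact ⟨by rw [this]; linarith, by rw [this]; linarith [hu m]⟩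
        refine Relation.ReflTransGen.head ⟨hmem, (adj3_iff _ _).mpr ⟨m, Or.inr rfl⟩⟩
          (ih (x - unitv m) hmem ?_)
        have key : |x m - 1| = |x m| - 1 := by
          rw [abs_of_pos hpos, abs_of_nonneg (by omega : (0:ℤ) ≤ x m - 1)]
        rcases fin3_cases m with rfl | rfl | rfl <;> (simp [unitv]; omega)
      · have hmem : (x + unitv m) ∈ Plane u ω := by
          have : dot3 (x + unitv m) u = dot3 x u + u m := by rw [dot3_add, dot3_unitv]
          exact ⟨by rw [this]; linarith [hu m], by rw [this]; linarith⟩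
        refine Relation.ReflTransGen.head ⟨hmem, (adj3_iff _ _).mpr ⟨m, Or.inl rfl⟩⟩
          (ih (x + unitv m) hmem ?_)
        have key : |x m + 1| = |x m| - 1 := by
          rw [abs_of_neg hneg, abs_of_nonpos (by omega : x m + 1 ≤ 0)]
          ring
        rcases fin3_cases m with rfl | rfl | rfl <;> (simp [unitv]; omega)

lemma conn_thick (u : R3) (hu : ∀ m, 0 ≤ u m) (ω : ℝ) (hω : 0 < ω)
    (hT : 2 * (u 0 + u 1 + u 2) ≤ ω) : Connected3 (Plane u ω) := by
  refine ⟨⟨0, zero_mem_plane hω⟩, fun x hx y hy => ?_⟩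
  have hx0 := conn_to_zero u hu ω hω hT (|x 0| + |x 1| + |x 2|).toNat x hx
    (by push_cast; omega)
  have hy0 := conn_to_zero u hu ω hω hT (|y 0| + |y 1| + |y 2|).toNat y hy
    (by push_cast; omega)
  exact hx0.trans (RTG_reverse hy hy0)

-- Stage 6
lemma FS_mem_O3 {v : R3} (hv : v ∈ O3) : FS v ∈ O3 := by
  obtain ⟨h0, h01, h12⟩ := hv
  unfold FS
  split
  · rename_i h
    exact ⟨by simpa using h0, by simpa using h.1, by simpa using h.2⟩
  · split
    · rename_i h h'
      refine ⟨by simpa using (by linarith : (0:ℝ) ≤ v 1 - v 0), ?_, ?_⟩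
      · simpa using le_of_lt h'.1
      · simpa using h'.2
    · rename_i h h'
      have h1 : v 1 - v 0 < v 0 := by
        by_contra hh; push_neg at hh; exact h ⟨hh, by linarith⟩
      have h2 : v 2 - v 0 < v 0 := by
        by_contra hh; push_neg at hh; exact h' ⟨h1, hh⟩
      exact ⟨by simpa using (by linarith : (0:ℝ) ≤ v 1 - v 0),
        by simpa using (by linarith : v 1 - v 0 ≤ v 2 - v 0),
        by simpa using le_of_lt h2⟩

lemma FS_sum {v : R3} : FS v 0 + FS v 1 + FS v 2 = v 0 + v 1 + v 2 - 2 * v 0 := by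
  unfold FS
  split
  · simp; ring
  · split <;> (simp; ring)

lemma FS_2_le {v : R3} (hv : v ∈ O3) : FS v 2 ≤ v 2 := by
  obtain ⟨h0, h01, h12⟩ := hv
  unfold FS
  split
  · simp; linarith
  · split
    · simp; linarith
    · simp; linarith

lemma orbit_O3 {v : R3} (hv : v ∈ O3) : ∀ n, FS^[n] v ∈ O3 := by
  intro n
  induction n with
  | zero => simpa using hv
  | succ n ih => rw [Function.iterate_succ_apply']; exact FS_mem_O3 ih

lemma omega_rec (v : R3) (hv : v ∈ O3) : omegaConn v = omegaConn (FS v) + v 0 := by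
  have hw := FS_mem_O3 hv
  have hwnn : ∀ m, 0 ≤ FS v m := by
    intro m
    rcases (by rcases m with ⟨mv, hm⟩; interval_cases mv <;> simp : m = 0 ∨ m = 1 ∨ m = 2)
      with rfl | rfl | rfl
    · exact hw.1
    · exact le_trans hw.1 hw.2.1
    · exact le_trans (le_trans hw.1 hw.2.1) hw.2.2
  set Sw := {ω : ℝ | 0 ≤ ω ∧ Connected3 (Plane (FS v) ω)} with hSw
  set Sv := {ω : ℝ | 0 ≤ ω ∧ Connected3 (Plane v ω)} with hSv
  have hSwne : Sw.Nonempty := by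
    refine ⟨2 * (FS v 0 + FS v 1 + FS v 2) + 1, ?_, conn_thick _ hwnn _ ?_ (by linarith)⟩
    · have := hwnn 0; have := hwnn 1; have := hwnn 2; linarith
    · have := hwnn 0; have := hwnn 1; have := hwnn 2; linarith
  have hbddw : BddBelow Sw := ⟨0, fun t ht => ht.1⟩
  have himg : Sv = (fun t => t + v 0) '' Sw := by
    ext ω
    constructor
    · rintro ⟨hω0, hconn⟩
      have hconn' := (part1 v hv ω).mp hconn
      have hpos : 0 < ω - v 0 := plane_pos_of_nonempty hconn'.1
      exact ⟨ω - v 0, ⟨le_of_lt hpos, hconn'⟩, by ring⟩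
    · rintro ⟨t, ⟨ht0, hconn⟩, rfl⟩
      refine ⟨show (0:ℝ) ≤ t + v 0 from by linarith [hv.1], ?_⟩
      show Connected3 (Plane v (t + v 0))
      rw [part1 v hv (t + v 0), show t + v 0 - v 0 = t from by ring]
      exact hconn
  have : omegaConn v = sInf ((fun t => t + v 0) '' Sw) := by rw [omegaConn, ← hSv, himg]
  rw [this, omegaConn, ← hSw]
  exact ((OrderIso.addRight (v 0)).map_csInf' hSwne hbddw).symm

lemma omega_nonneg (v : R3) : 0 ≤ omegaConn v :=
  Real.sInf_nonneg (fun x hx => hx.1)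

lemma part3 (v : R3) (hv : v ∈ F3set) :
    omegaConn v = ∑' n : ℕ, (FS^[n] v) 0 ∧ omegaConn v = (v 0 + v 1 + v 2) / 2 := by
  obtain ⟨hvO, hF⟩ := hv
  set a : ℕ → ℝ := fun n => (FS^[n] v) 0 with hadef
  set t : ℕ → ℝ := fun n => (FS^[n] v) 0 + (FS^[n] v) 1 + (FS^[n] v) 2 with htdef
  set d : ℕ → ℝ := fun n => (FS^[n] v) 2 with hddef
  have hO := orbit_O3 hvO
  have hannn : ∀ n, 0 ≤ a n := fun n => (hO n).1
  have hrec_t : ∀ n, t (n + 1) = t n - 2 * a n := by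
    intro n
    simp only [htdef, hadef, Function.iterate_succ_apply']
    exact FS_sum
  have hd_anti : Antitone d := by
    apply antitone_nat_of_succ_le
    intro n
    simp only [hddef, Function.iterate_succ_apply']
    exact FS_2_le (hO n)
  have hd0 : ∀ n, 0 ≤ d n := by
    intro n; have h := hO n
    exact le_trans (le_trans h.1 h.2.1) h.2.2
  have ht0 : ∀ n, 0 ≤ t n := by
    intro n; have h := hO n
    have := h.1; have := h.2.1; have := h.2.2
    simp only [htdef]; linarith
  have htd : ∀ n, t n ≤ 3 * d n := by
    intro n; have h := hO n
    have := h.1; have := h.2.1; have := h.2.2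
    simp only [htdef, hddef]; linarith
  have ht_anti : Antitone t := by
    apply antitone_nat_of_succ_le
    intro n; rw [hrec_t n]; linarith [hannn n]
  -- iterated recursion
  have hiter : ∀ n, omegaConn v = (∑ i ∈ Finset.range n, a i) + omegaConn (FS^[n] v) := by
    intro n
    induction n with
    | zero => simp
    | succ n ih =>
      rw [Finset.sum_range_succ, ih]
      have := omega_rec (FS^[n] v) (hO n)
      rw [Function.iterate_succ_apply']
      simp only [hadef]
      linarith
  have htpos : ∀ n, 0 < t n := by
    intro n
    have h := hO n
    have hFn := hF n
    by_contra hh; push_neg at hh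
    have := h.1; have := h.2.1; have := h.2.2
    simp only [htdef] at hh
    linarith
  have hΩub : ∀ n, omegaConn (FS^[n] v) ≤ 2 * t n := by
    intro n
    have h := hO n
    have hnn : ∀ m, 0 ≤ (FS^[n] v) m := by
      intro m
      rcases fin3_cases m with rfl | rfl | rfl
      · exact h.1
      · exact le_trans h.1 h.2.1
      · exact le_trans (le_trans h.1 h.2.1) h.2.2
    apply csInf_le ⟨0, fun x hx => hx.1⟩
    refine ⟨by linarith [htpos n], conn_thick _ hnn _ (by linarith [htpos n]) ?_⟩
    simp only [htdef]; linarith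
  -- limits
  have hdbdd : BddBelow (Set.range d) := ⟨0, by rintro x ⟨n, rfl⟩; exact hd0 n⟩
  have htbdd : BddBelow (Set.range t) := ⟨0, by rintro x ⟨n, rfl⟩; exact ht0 n⟩
  have hd_to : Tendsto d atTop (nhds (⨅ n, d n)) := tendsto_atTop_ciInf hd_anti hdbdd
  have ht_to : Tendsto t atTop (nhds (⨅ n, t n)) := tendsto_atTop_ciInf ht_anti htbdd
  have ha_to : Tendsto a atTop (nhds 0) := by
    have h1 : Tendsto (fun n => (t n - t (n + 1)) / 2) atTop
        (nhds (((⨅ n, t n) - (⨅ n, t n)) / 2)) :=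
      (ht_to.sub (ht_to.comp (tendsto_add_atTop_nat 1))).div_const 2
    rw [sub_self, zero_div] at h1
    apply h1.congr
    intro n
    rw [hrec_t n]; ring
  have hczero : (⨅ n, d n) = 0 := by
    by_contra hc
    have hcpos : 0 < ⨅ n, d n :=
      lt_of_le_of_ne (le_ciInf fun n => hd0 n) (Ne.symm hc)
    set c := ⨅ n, d n with hcdef
    obtain ⟨N, hN⟩ := eventually_atTop.mp (ha_to.eventually_lt_const (by positivity : (0:ℝ) < c / 4))
    have hstep : ∀ n, N ≤ n → a (n + 1) = a n := by
      intro n hn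
      have h := hO n
      have hFn := hF n
      have hdc : c ≤ d n := ciInf_le hdbdd n
      have han : a n < c / 4 := hN n hn
      have hcond : (FS^[n] v) 0 ≤ (FS^[n] v) 1 - (FS^[n] v) 0 ∧
          (FS^[n] v) 1 - (FS^[n] v) 0 ≤ (FS^[n] v) 2 - (FS^[n] v) 0 := by
        constructor
        · simp only [hadef] at han
          simp only [hddef] at hdc
          linarith [h.2.2]
        · linarith [h.2.2]
      simp only [hadef, Function.iterate_succ_apply', FS, if_pos hcond]
      simp
    have hconst : ∀ n, N ≤ n → a n = a N := by
      intro n hn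
      induction n, hn using Nat.le_induction with
      | base => rfl
      | succ n hn ih => rw [hstep n hn, ih]
    have haN : Tendsto a atTop (nhds (a N)) :=
      tendsto_atTop_of_eventually_const hconst
    have haN0 : a N = 0 := tendsto_nhds_unique haN ha_to
    have h := hO N
    have hFn := hF N
    simp only [hadef] at haN0
    linarith [h.2.2, haN0]
  have ht_zero : Tendsto t atTop (nhds 0) := by
    apply squeeze_zero ht0 htd
    have := hd_to.const_mul 3
    rw [hczero, mul_zero] at this
    exact this
  have hΩ_to : Tendsto (fun n => omegaConn (FS^[n] v)) atTop (nhds 0) := by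
    apply squeeze_zero (fun n => omega_nonneg _) hΩub
    have := ht_zero.const_mul 2
    rwa [mul_zero] at this
  have hS_to : Tendsto (fun n => ∑ i ∈ Finset.range n, a i) atTop (nhds (omegaConn v)) := by
    have h1 : Tendsto (fun n => omegaConn v - omegaConn (FS^[n] v)) atTop
        (nhds (omegaConn v - 0)) := tendsto_const_nhds.sub hΩ_to
    rw [sub_zero] at h1
    apply h1.congr
    intro n
    have := hiter n
    linarith
  have hsumm : Summable a := by
    apply summable_of_sum_range_le hannn
    intro n
    have := hiter n
    have := omega_nonneg (FS^[n] v)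
    linarith
  constructor
  · exact tendsto_nhds_unique hS_to hsumm.hasSum.tendsto_sum_nat
  · have hsum_t : ∀ n, ∑ i ∈ Finset.range n, a i = (t 0 - t n) / 2 := by
      intro n
      induction n with
      | zero => simp
      | succ n ih => rw [Finset.sum_range_succ, ih, hrec_t n]; ring
    have h2 : Tendsto (fun n => (t 0 - t n) / 2) atTop (nhds ((t 0 - 0) / 2)) :=
      (tendsto_const_nhds.sub ht_zero).div_const 2
    rw [sub_zero] at h2
    have := tendsto_nhds_unique hS_to (h2.congr (fun n => (hsum_t n).symm))
    rw [this]
    simp only [htdef, Function.iterate_zero_apply]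


/-- `P(v,ω)` is 2-connected iff `P(F(v), ω − v₁)` is; consequently
`Ω(v) = Ω(F(v)) + v₁`; and if `v ∈ F₃` then `Ω(v) = Σ v₁⁽ⁿ⁾ = ‖v‖₁/2`. -/
theorem connecting_thickness_step (v : R3) (hv : v ∈ O3) (ω : ℝ) :
    (Connected3 (Plane v ω) ↔ Connected3 (Plane (FS v) (ω - v 0))) ∧
    omegaConn v = omegaConn (FS v) + v 0 ∧
    (v ∈ F3set →
      omegaConn v = ∑' n : ℕ, (FS^[n] v) 0 ∧
      omegaConn v = (v 0 + v 1 + v 2) / 2) := by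
  exact ⟨part1 v hv ω, omega_rec v hv, fun hF => part3 v hF⟩
end
end

section
/- Let v ∈ O₃⁺. Then v ∈ F₃ if and only if the F-expansion (iₙ)ₙ of v under the ordered fully subtractive algorithm takes the value 3 infinitely often. -/
open Matrix
open scoped Classical

noncomputable section

/-- Key one-step lemma: `FS` preserves `O₃⁺`; on branches 1,2 the top entry drops by `v 0`
and the sum of the two lower entries becomes `v 1`; branch 3 forces `v 2 < v 0 + v 1`. -/
lemma FS_key (v : R3) (hv : v ∈ O3) :
    FS v ∈ O3 ∧
    (FSidx v ≠ 2 → (FS v) 2 = v 2 - v 0 ∧ (FS v) 0 + (FS v) 1 = v 1) ∧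
    (FSidx v = 2 → v 2 < v 0 + v 1) := by
  obtain ⟨h0, h1, h2⟩ := hv
  unfold FS FSidx
  split_ifs with hc1 hc2
  · refine ⟨⟨?_, ?_, ?_⟩, fun _ => ⟨?_, ?_⟩, fun h => absurd h (by decide)⟩ <;>
      simp only [O3, Set.mem_setOf_eq, Matrix.cons_val_zero, Matrix.cons_val_one,
        Matrix.head_cons, Matrix.cons_val_two, Matrix.tail_cons] <;> linarith
  · refine ⟨⟨?_, ?_, ?_⟩, fun _ => ⟨?_, ?_⟩, fun h => absurd h (by decide)⟩ <;>
      simp only [O3, Set.mem_setOf_eq, Matrix.cons_val_zero, Matrix.cons_val_one,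
        Matrix.head_cons, Matrix.cons_val_two, Matrix.tail_cons] <;> linarith
  · have hA : v 1 - v 0 < v 0 := by
      by_contra h; exact hc1 ⟨not_lt.1 h, by linarith⟩
    have hB : v 2 - v 0 < v 0 := by
      by_contra h; exact hc2 ⟨hA, not_lt.1 h⟩
    refine ⟨⟨?_, ?_, ?_⟩, fun h => absurd rfl h, fun _ => by linarith⟩ <;>
      simp only [O3, Set.mem_setOf_eq, Matrix.cons_val_zero, Matrix.cons_val_one,
        Matrix.head_cons, Matrix.cons_val_two, Matrix.tail_cons] <;> linarith

/-- `v ∈ F₃` iff the F-expansion of `v` takes the value `3`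
(encoded here by the branch index `2 : Fin 3`) infinitely often. -/
theorem mem_F3_iff_infinitely_many_threes (v : R3) (hv : v ∈ O3) :
    v ∈ F3set ↔ ∀ N : ℕ, ∃ n ≥ N, FSidx (FS^[n] v) = 2 := by

  have hW : ∀ n : ℕ, FS^[n] v ∈ O3 := by
    intro n
    induction n with
    | zero => exact hv
    | succ k ih => rw [Function.iterate_succ_apply']; exact (FS_key _ ih).1
  constructor
  · intro hF N
    by_contra h
    push_neg at h
    have hno : ∀ n ≥ N, FSidx (FS^[n] v) ≠ 2 := h
    set c : ℝ := (FS^[N] v) 0 + (FS^[N] v) 1 - (FS^[N] v) 2 with hc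
    have hcpos : 0 < c := by have := hF.2 N; linarith [hF.2 N]
    have hiter : ∀ k : ℕ,
        (FS^[N + k] v) 0 + (FS^[N + k] v) 1 - (FS^[N + k] v) 2 = c ∧
        (FS^[N + k] v) 2 ≤ (FS^[N] v) 2 - k * c := by
      intro k
      induction k with
      | zero => simp [hc]
      | succ m ih =>
        have hm := hW (N + m)
        have hne := hno (N + m) (Nat.le_add_right _ _)
        obtain ⟨h3, hsum⟩ := (FS_key _ hm).2.1 hne
        have hstep : FS^[N + (m+1)] v = FS (FS^[N + m] v) := by
          rw [← Nat.add_assoc, Function.iterate_succ_apply']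
        have hd : (FS^[N+m] v) 0 ≥ c := by
          obtain ⟨-, -, hle⟩ := hm
          linarith [ih.1]
        constructor
        · rw [hstep, h3, hsum]; linarith [ih.1]
        · rw [hstep, h3]
          push_cast
          nlinarith [ih.2]
    obtain ⟨k, hk⟩ := exists_nat_gt ((FS^[N] v) 2 / c)
    have hk2 : (FS^[N] v) 2 < k * c := by
      rw [div_lt_iff₀ hcpos] at hk; linarith
    have := (hiter k).2
    obtain ⟨ha, hb, hcc⟩ := hW (N + k)
    linarith
  · intro h
    refine ⟨hv, fun n => ?_⟩
    by_contra hle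
    push_neg at hle
    have hpers : ∀ k : ℕ, (FS^[n + k] v) 0 + (FS^[n + k] v) 1 ≤ (FS^[n + k] v) 2 := by
      intro k
      induction k with
      | zero => simpa using hle
      | succ m ih =>
        have hm := hW (n + m)
        have hne : FSidx (FS^[n+m] v) ≠ 2 := by
          intro h2
          have := (FS_key _ hm).2.2 h2
          linarith
        obtain ⟨h3, hsum⟩ := (FS_key _ hm).2.1 hne
        have hstep : FS^[n + (m+1)] v = FS (FS^[n + m] v) := by
          rw [← Nat.add_assoc, Function.iterate_succ_apply']
        rw [hstep, h3, hsum]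
        obtain ⟨ha, hb, hcc⟩ := hm
        linarith
    obtain ⟨m, hm, hidx⟩ := h n
    obtain ⟨k, rfl⟩ := Nat.exists_eq_add_of_le hm
    have := (FS_key _ (hW (n + k))).2.2 hidx
    linarith [hpers k]
end
end

section
/- Let v ∈ F₃ and let (Tₙ)ₙ be the associated sequence of subsets of ℤ³. Then for all n ≥ 1, Tₙ = {x ∈ ℤ³ : ⟨x,v⟩ = Σ_{i=0}^{n−1} εᵢ v₁⁽ⁱ⁾ for some ε₀,…,ε_{n−1} ∈ {0,1}}. -/
open Matrix
open scoped Classical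

noncomputable section

namespace FSAux

/-- The integer-vector companion step (transpose-matrix action, written explicitly). -/
def zstep (u : R3) (z : Z3) : Z3 :=
  if u 0 ≤ u 1 - u 0 ∧ u 1 - u 0 ≤ u 2 - u 0 then ![z 0 + z 1 + z 2, z 1, z 2]
  else if u 1 - u 0 < u 0 ∧ u 0 ≤ u 2 - u 0 then ![z 1, z 0 + z 1 + z 2, z 2]
  else ![z 1, z 2, z 0 + z 1 + z 2]

lemma branch_trichotomy (u : R3) (h12 : u 1 ≤ u 2) :
    (u 0 ≤ u 1 - u 0) ∨ (u 1 - u 0 < u 0 ∧ u 0 ≤ u 2 - u 0) ∨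
    (u 1 - u 0 < u 0 ∧ u 2 - u 0 < u 0) := by
  by_cases h1 : u 0 ≤ u 1 - u 0
  · exact Or.inl h1
  · by_cases h2 : u 0 ≤ u 2 - u 0
    · exact Or.inr (Or.inl ⟨by linarith, h2⟩)
    · exact Or.inr (Or.inr ⟨by linarith, by linarith⟩)

lemma FS_eq1 {u : R3} (h : u 0 ≤ u 1 - u 0) (h12 : u 1 ≤ u 2) :
    FS u = ![u 0, u 1 - u 0, u 2 - u 0] ∧ FSidx u = 0 ∧
      ∀ z : Z3, zstep u z = ![z 0 + z 1 + z 2, z 1, z 2] := by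
  have hc : u 0 ≤ u 1 - u 0 ∧ u 1 - u 0 ≤ u 2 - u 0 := ⟨h, by linarith⟩
  refine ⟨?_, ?_, fun z => ?_⟩ <;> simp only [FS, FSidx, zstep, if_pos hc]

lemma FS_eq2 {u : R3} (h1 : u 1 - u 0 < u 0) (h2 : u 0 ≤ u 2 - u 0) :
    FS u = ![u 1 - u 0, u 0, u 2 - u 0] ∧ FSidx u = 1 ∧
      ∀ z : Z3, zstep u z = ![z 1, z 0 + z 1 + z 2, z 2] := by
  have hc : ¬(u 0 ≤ u 1 - u 0 ∧ u 1 - u 0 ≤ u 2 - u 0) := by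
    rintro ⟨a, -⟩; linarith
  refine ⟨?_, ?_, fun z => ?_⟩ <;>
    simp only [FS, FSidx, zstep, if_neg hc, if_pos (⟨h1, h2⟩ : u 1 - u 0 < u 0 ∧ u 0 ≤ u 2 - u 0)]

lemma FS_eq3 {u : R3} (h1 : u 1 - u 0 < u 0) (h2 : u 2 - u 0 < u 0) :
    FS u = ![u 1 - u 0, u 2 - u 0, u 0] ∧ FSidx u = 2 ∧
      ∀ z : Z3, zstep u z = ![z 1, z 2, z 0 + z 1 + z 2] := by
  have hc : ¬(u 0 ≤ u 1 - u 0 ∧ u 1 - u 0 ≤ u 2 - u 0) := by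
    rintro ⟨a, -⟩; linarith
  have hc2 : ¬(u 1 - u 0 < u 0 ∧ u 0 ≤ u 2 - u 0) := by
    rintro ⟨-, b⟩; linarith
  refine ⟨?_, ?_, fun z => ?_⟩ <;> simp only [FS, FSidx, zstep, if_neg hc, if_neg hc2]

/-- "Nice" vectors: positive ordered with the Meester condition. -/
def Nice (u : R3) : Prop := 0 < u 0 ∧ u 0 ≤ u 1 ∧ u 1 ≤ u 2 ∧ u 2 < u 0 + u 1

lemma O3_FS {u : R3} (hu : u ∈ O3) : FS u ∈ O3 := by
  obtain ⟨h0, h01, h12⟩ := hu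
  rcases branch_trichotomy u h12 with h | ⟨h1, h2⟩ | ⟨h1, h2⟩
  · rw [(FS_eq1 h h12).1]
    refine ⟨by simpa using h0, ?_, ?_⟩ <;> simp <;> linarith
  · rw [(FS_eq2 h1 h2).1]
    refine ⟨?_, ?_, ?_⟩ <;> simp <;> linarith
  · rw [(FS_eq3 h1 h2).1]
    refine ⟨?_, ?_, ?_⟩ <;> simp <;> linarith

lemma iter_mem_O3 {v : R3} (hv : v ∈ F3set) (n : ℕ) : FS^[n] v ∈ O3 := by
  induction n with
  | zero => exact hv.1
  | succ n ih => rw [Function.iterate_succ_apply']; exact O3_FS ih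

lemma nice_iter {v : R3} (hv : v ∈ F3set) (n : ℕ) : Nice (FS^[n] v) := by
  obtain ⟨h0, h01, h12⟩ := iter_mem_O3 hv n
  have hc := hv.2 n
  exact ⟨by linarith, h01, h12, by linarith⟩

end FSAux
namespace FSAux

/-- weighted ℓ¹ pairing -/
def Qf (z : Z3) (u : R3) : ℝ := ∑ i, (|z i| : ℝ) * u i

def Pp (z : Z3) : ℤ := max (z 0) 0 + max (z 1) 0 + max (z 2) 0
def Nn (z : Z3) : ℤ := max (-z 0) 0 + max (-z 1) 0 + max (-z 2) 0

lemma abs_eq_pn (a : ℤ) : |a| = max a 0 + max (-a) 0 := by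
  rcases le_total a 0 with h | h
  · rw [abs_of_nonpos h, max_eq_right h, max_eq_left (by linarith)]; ring
  · rw [abs_of_nonneg h, max_eq_left h, max_eq_right (by linarith)]; ring

lemma self_eq_pn (a : ℤ) : a = max a 0 - max (-a) 0 := by
  rcases le_total a 0 with h | h
  · rw [max_eq_right h, max_eq_left (by linarith)]; ring
  · rw [max_eq_left h, max_eq_right (by linarith)]; ring

lemma abs_sum_identity (z : Z3) :
    |z 0| + |z 1| + |z 2| - |z 0 + z 1 + z 2| = 2 * min (Pp z) (Nn z) := by
  have h1 : z 0 + z 1 + z 2 = Pp z - Nn z := by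
    rw [Pp, Nn]
    nth_rewrite 1 [self_eq_pn (z 0), self_eq_pn (z 1), self_eq_pn (z 2)]; ring
  have h2 : |z 0| + |z 1| + |z 2| = Pp z + Nn z := by
    rw [abs_eq_pn (z 0), abs_eq_pn (z 1), abs_eq_pn (z 2), Pp, Nn]; ring
  rw [h1, h2]
  rcases le_total (Pp z) (Nn z) with h | h
  · rw [min_eq_left h, abs_of_nonpos (by linarith)]; ring
  · rw [min_eq_right h, abs_of_nonneg (by linarith)]; ring

lemma sig_step {u : R3} (h12 : u 1 ≤ u 2) :
    FS u 0 + FS u 1 + FS u 2 = u 0 + u 1 + u 2 - 2 * u 0 := by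
  rcases branch_trichotomy u h12 with h | ⟨h1, h2⟩ | ⟨h1, h2⟩
  · rw [(FS_eq1 h h12).1]; simp; ring
  · rw [(FS_eq2 h1 h2).1]; simp; ring
  · rw [(FS_eq3 h1 h2).1]; simp; ring

lemma v0_step {u : R3} (h12 : u 1 ≤ u 2) : FS u 0 ≤ u 0 := by
  rcases branch_trichotomy u h12 with h | ⟨h1, h2⟩ | ⟨h1, h2⟩
  · rw [(FS_eq1 h h12).1]; simp
  · rw [(FS_eq2 h1 h2).1]; simp; linarith
  · rw [(FS_eq3 h1 h2).1]; simp; linarith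

lemma v0_step_eq {u : R3} (h12 : u 1 ≤ u 2) (h : u 0 ≤ u 1 - u 0) : FS u 0 = u 0 := by
  rw [(FS_eq1 h h12).1]; simp

lemma dot_step {u : R3} (h12 : u 1 ≤ u 2) (z : Z3) :
    dot3 (zstep u z) (FS u) = dot3 z u := by
  rcases branch_trichotomy u h12 with h | ⟨h1, h2⟩ | ⟨h1, h2⟩
  · obtain ⟨e1, -, e3⟩ := FS_eq1 h h12
    rw [e1, e3, dot3, dot3, Fin.sum_univ_three, Fin.sum_univ_three]
    simp; push_cast; ring
  · obtain ⟨e1, -, e3⟩ := FS_eq2 h1 h2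
    rw [e1, e3, dot3, dot3, Fin.sum_univ_three, Fin.sum_univ_three]
    simp; push_cast; ring
  · obtain ⟨e1, -, e3⟩ := FS_eq3 h1 h2
    rw [e1, e3, dot3, dot3, Fin.sum_univ_three, Fin.sum_univ_three]
    simp; push_cast; ring

lemma Qf_step {u : R3} (h12 : u 1 ≤ u 2) (z : Z3) :
    Qf (zstep u z) (FS u) = Qf z u - (2 * (min (Pp z) (Nn z)) : ℤ) * u 0 := by
  have ki : |z 0 + z 1 + z 2| = |z 0| + |z 1| + |z 2| - 2 * min (Pp z) (Nn z) := by
    linarith [abs_sum_identity z]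
  have key : |(z 0 : ℝ) + (z 1 : ℝ) + (z 2 : ℝ)|
      = |(z 0 : ℝ)| + |(z 1 : ℝ)| + |(z 2 : ℝ)| - 2 * ((min (Pp z) (Nn z) : ℤ) : ℝ) := by
    exact_mod_cast congrArg (fun t : ℤ => (t : ℝ)) ki
  rcases branch_trichotomy u h12 with h | ⟨h1, h2⟩ | ⟨h1, h2⟩ <;>
    [obtain ⟨e1, -, e3⟩ := FS_eq1 h h12; obtain ⟨e1, -, e3⟩ := FS_eq2 h1 h2;
     obtain ⟨e1, -, e3⟩ := FS_eq3 h1 h2] <;>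
  · rw [e1, e3 z, Qf, Qf, Fin.sum_univ_three, Fin.sum_univ_three]
    simp only [Matrix.cons_val_zero, Matrix.cons_val_one, Matrix.head_cons,
      Matrix.cons_val_two, Matrix.tail_cons]
    push_cast
    rw [key]
    push_cast
    ring

lemma zstep_ne_zero {u : R3} (h12 : u 1 ≤ u 2) {z : Z3} (hz : z ≠ 0) :
    zstep u z ≠ 0 := by
  intro h0
  apply hz
  have e0 := congrFun h0 0
  have e1 := congrFun h0 1
  have e2 := congrFun h0 2
  rcases branch_trichotomy u h12 with h | ⟨hh1, hh2⟩ | ⟨hh1, hh2⟩ <;>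
    [rw [(FS_eq1 h h12).2.2 z] at e0 e1 e2;
     rw [(FS_eq2 hh1 hh2).2.2 z] at e0 e1 e2;
     rw [(FS_eq3 hh1 hh2).2.2 z] at e0 e1 e2] <;>
  · simp only [Matrix.cons_val_zero, Matrix.cons_val_one, Matrix.head_cons,
      Matrix.cons_val_two, Matrix.tail_cons, Pi.zero_apply] at e0 e1 e2
    have h3 : z 0 = 0 ∧ z 1 = 0 ∧ z 2 = 0 := by omega
    funext i
    fin_cases i <;> simp [h3.1, h3.2.1, h3.2.2]

end FSAux
namespace FSAux

lemma rabs_eq_pn (a : ℝ) : |a| = max a 0 + max (-a) 0 := by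
  rcases le_total a 0 with h | h
  · rw [abs_of_nonpos h, max_eq_right h, max_eq_left (by linarith)]; ring
  · rw [abs_of_nonneg h, max_eq_left h, max_eq_right (by linarith)]; ring

lemma rself_eq_pn (a : ℝ) : a = max a 0 - max (-a) 0 := by
  rcases le_total a 0 with h | h
  · rw [max_eq_right h, max_eq_left (by linarith)]; ring
  · rw [max_eq_left h, max_eq_right (by linarith)]; ring

lemma Qf_nonneg {u : R3} (hu : Nice u) (z : Z3) : 0 ≤ Qf z u := by
  obtain ⟨h0, h01, h12, hc⟩ := hu
  rw [Qf, Fin.sum_univ_three]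
  have a0 : (0:ℝ) ≤ |(z 0 : ℝ)| := abs_nonneg _
  have a1 : (0:ℝ) ≤ |(z 1 : ℝ)| := abs_nonneg _
  have a2 : (0:ℝ) ≤ |(z 2 : ℝ)| := abs_nonneg _
  push_cast
  nlinarith

lemma Qf_le_P {u : R3} (hu : Nice u) {z : Z3} (hd : dot3 z u = 0) :
    Qf z u ≤ 2 * (Pp z : ℝ) * u 2 := by
  obtain ⟨h0, h01, h12, hc⟩ := hu
  rw [dot3, Fin.sum_univ_three] at hd
  rw [Qf, Fin.sum_univ_three, Pp]
  push_cast
  rw [rabs_eq_pn ((z 0 : ℝ)), rabs_eq_pn ((z 1 : ℝ)), rabs_eq_pn ((z 2 : ℝ))]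
  nth_rewrite 1 [rself_eq_pn ((z 0:ℝ))] at hd
  nth_rewrite 1 [rself_eq_pn ((z 1:ℝ))] at hd
  nth_rewrite 1 [rself_eq_pn ((z 2:ℝ))] at hd
  have p0 : (0:ℝ) ≤ max ((z 0:ℝ)) 0 := le_max_right _ _
  have p1 : (0:ℝ) ≤ max ((z 1:ℝ)) 0 := le_max_right _ _
  have p2 : (0:ℝ) ≤ max ((z 2:ℝ)) 0 := le_max_right _ _
  have q0 : max ((z 0:ℝ)) 0 * u 0 ≤ max ((z 0:ℝ)) 0 * u 2 :=
    mul_le_mul_of_nonneg_left (by linarith) p0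
  have q1 : max ((z 1:ℝ)) 0 * u 1 ≤ max ((z 1:ℝ)) 0 * u 2 :=
    mul_le_mul_of_nonneg_left (by linarith) p1
  linarith

lemma Qf_le_N {u : R3} (hu : Nice u) {z : Z3} (hd : dot3 z u = 0) :
    Qf z u ≤ 2 * (Nn z : ℝ) * u 2 := by
  obtain ⟨h0, h01, h12, hc⟩ := hu
  rw [dot3, Fin.sum_univ_three] at hd
  rw [Qf, Fin.sum_univ_three, Nn]
  push_cast
  rw [rabs_eq_pn ((z 0 : ℝ)), rabs_eq_pn ((z 1 : ℝ)), rabs_eq_pn ((z 2 : ℝ))]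
  nth_rewrite 1 [rself_eq_pn ((z 0:ℝ))] at hd
  nth_rewrite 1 [rself_eq_pn ((z 1:ℝ))] at hd
  nth_rewrite 1 [rself_eq_pn ((z 2:ℝ))] at hd
  have p0 : (0:ℝ) ≤ max (-(z 0:ℝ)) 0 := le_max_right _ _
  have p1 : (0:ℝ) ≤ max (-(z 1:ℝ)) 0 := le_max_right _ _
  have p2 : (0:ℝ) ≤ max (-(z 2:ℝ)) 0 := le_max_right _ _
  have q0 : max (-(z 0:ℝ)) 0 * u 0 ≤ max (-(z 0:ℝ)) 0 * u 2 :=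
    mul_le_mul_of_nonneg_left (by linarith) p0
  have q1 : max (-(z 1:ℝ)) 0 * u 1 ≤ max (-(z 1:ℝ)) 0 * u 2 :=
    mul_le_mul_of_nonneg_left (by linarith) p1
  linarith

lemma one_le_minPN {u : R3} (hu : Nice u) {z : Z3} (hd : dot3 z u = 0) (hz : z ≠ 0) :
    1 ≤ min (Pp z) (Nn z) := by
  obtain ⟨h0, h01, h12, hc⟩ := hu
  have hu1 : (0:ℝ) < u 1 := by linarith
  have hu2 : (0:ℝ) < u 2 := by linarith
  rw [dot3, Fin.sum_univ_three] at hd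
  -- if one of the sides vanishes, all entries of z have a fixed sign, hence z = 0
  have hzero : (∀ i, z i ≤ 0) ∨ (∀ i, 0 ≤ z i) → False := by
    rintro (hs | hs)
    · have t0 : (z 0 : ℝ) * u 0 ≤ 0 :=
        mul_nonpos_iff.mpr (Or.inr ⟨by exact_mod_cast hs 0, le_of_lt h0⟩)
      have t1 : (z 1 : ℝ) * u 1 ≤ 0 :=
        mul_nonpos_iff.mpr (Or.inr ⟨by exact_mod_cast hs 1, le_of_lt hu1⟩)
      have t2 : (z 2 : ℝ) * u 2 ≤ 0 :=
        mul_nonpos_iff.mpr (Or.inr ⟨by exact_mod_cast hs 2, le_of_lt hu2⟩)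
      have e0 : (z 0 : ℝ) * u 0 = 0 := by linarith
      have e1 : (z 1 : ℝ) * u 1 = 0 := by linarith
      have e2 : (z 2 : ℝ) * u 2 = 0 := by linarith
      apply hz
      have w0 : z 0 = 0 := by
        rcases mul_eq_zero.mp e0 with h | h
        · exact_mod_cast h
        · exact absurd h (ne_of_gt h0)
      have w1 : z 1 = 0 := by
        rcases mul_eq_zero.mp e1 with h | h
        · exact_mod_cast h
        · exact absurd h (ne_of_gt hu1)
      have w2 : z 2 = 0 := by
        rcases mul_eq_zero.mp e2 with h | h
        · exact_mod_cast h
        · exact absurd h (ne_of_gt hu2)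
      funext i; fin_cases i <;> simpa [w0, w1, w2]
    · have t0 : (0:ℝ) ≤ (z 0 : ℝ) * u 0 :=
        mul_nonneg (by exact_mod_cast hs 0) (le_of_lt h0)
      have t1 : (0:ℝ) ≤ (z 1 : ℝ) * u 1 :=
        mul_nonneg (by exact_mod_cast hs 1) (le_of_lt hu1)
      have t2 : (0:ℝ) ≤ (z 2 : ℝ) * u 2 :=
        mul_nonneg (by exact_mod_cast hs 2) (le_of_lt hu2)
      have e0 : (z 0 : ℝ) * u 0 = 0 := by linarith
      have e1 : (z 1 : ℝ) * u 1 = 0 := by linarith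
      have e2 : (z 2 : ℝ) * u 2 = 0 := by linarith
      apply hz
      have w0 : z 0 = 0 := by
        rcases mul_eq_zero.mp e0 with h | h
        · exact_mod_cast h
        · exact absurd h (ne_of_gt h0)
      have w1 : z 1 = 0 := by
        rcases mul_eq_zero.mp e1 with h | h
        · exact_mod_cast h
        · exact absurd h (ne_of_gt hu1)
      have w2 : z 2 = 0 := by
        rcases mul_eq_zero.mp e2 with h | h
        · exact_mod_cast h
        · exact absurd h (ne_of_gt hu2)
      funext i; fin_cases i <;> simpa [w0, w1, w2]
  by_contra hlt
  push_neg at hlt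
  have m0 : (0:ℤ) ≤ max (z 0) 0 := le_max_right _ _
  have m1 : (0:ℤ) ≤ max (z 1) 0 := le_max_right _ _
  have m2 : (0:ℤ) ≤ max (z 2) 0 := le_max_right _ _
  have n0 : (0:ℤ) ≤ max (-z 0) 0 := le_max_right _ _
  have n1 : (0:ℤ) ≤ max (-z 1) 0 := le_max_right _ _
  have n2 : (0:ℤ) ≤ max (-z 2) 0 := le_max_right _ _
  rcases min_lt_iff.mp hlt with h | h
  · refine hzero (Or.inl fun i => ?_)
    have hP : Pp z + 1 ≤ 1 := Int.lt_iff_add_one_le.mp h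
    rw [Pp] at hP
    have l0 : z 0 ≤ max (z 0) 0 := le_max_left _ _
    have l1 : z 1 ≤ max (z 1) 0 := le_max_left _ _
    have l2 : z 2 ≤ max (z 2) 0 := le_max_left _ _
    fin_cases i
    · show z 0 ≤ 0; linarith
    · show z 1 ≤ 0; linarith
    · show z 2 ≤ 0; linarith
  · refine hzero (Or.inr fun i => ?_)
    have hP : Nn z + 1 ≤ 1 := Int.lt_iff_add_one_le.mp h
    rw [Nn] at hP
    have l0 : -z 0 ≤ max (-z 0) 0 := le_max_left _ _
    have l1 : -z 1 ≤ max (-z 1) 0 := le_max_left _ _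
    have l2 : -z 2 ≤ max (-z 2) 0 := le_max_left _ _
    fin_cases i
    · show 0 ≤ z 0; linarith
    · show 0 ≤ z 1; linarith
    · show 0 ≤ z 2; linarith

end FSAux
namespace FSAux

/-- sum of coordinates along the orbit -/
def sig (v : R3) (n : ℕ) : ℝ := (FS^[n] v) 0 + (FS^[n] v) 1 + (FS^[n] v) 2

lemma sig_succ {v : R3} (hv : v ∈ F3set) (n : ℕ) :
    sig v (n + 1) = sig v n - 2 * (FS^[n] v) 0 := by
  have h12 := (nice_iter hv n).2.2.1
  rw [sig, sig, Function.iterate_succ_apply', sig_step h12]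

lemma sig_nonneg {v : R3} (hv : v ∈ F3set) (n : ℕ) : 0 ≤ sig v n := by
  obtain ⟨h0, h01, h12, hc⟩ := nice_iter hv n
  rw [sig]; linarith

lemma sig_gt {v : R3} (hv : v ∈ F3set) (n : ℕ) : 2 * (FS^[n] v) 2 < sig v n := by
  obtain ⟨h0, h01, h12, hc⟩ := nice_iter hv n
  rw [sig]; linarith

lemma v0_succ_le {v : R3} (hv : v ∈ F3set) (n : ℕ) :
    (FS^[n + 1] v) 0 ≤ (FS^[n] v) 0 := by
  rw [Function.iterate_succ_apply']
  exact v0_step (nice_iter hv n).2.2.1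

lemma v0_mono {v : R3} (hv : v ∈ F3set) {n m : ℕ} (h : n ≤ m) :
    (FS^[m] v) 0 ≤ (FS^[n] v) 0 := by
  induction m with
  | zero => simp_all
  | succ m ih =>
      rcases Nat.lt_or_ge n (m + 1) with hlt | hge
      · exact le_trans (v0_succ_le hv m) (ih (Nat.lt_succ_iff.mp hlt))
      · have : n = m + 1 := le_antisymm h hge
        subst this; rfl

lemma sig_mono {v : R3} (hv : v ∈ F3set) {n m : ℕ} (h : n ≤ m) :
    sig v m ≤ sig v n := by
  induction m with
  | zero => simp_all
  | succ m ih =>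
      rcases Nat.lt_or_ge n (m + 1) with hlt | hge
      · have h0 := (nice_iter hv m).1
        have := sig_succ hv m
        have := ih (Nat.lt_succ_iff.mp hlt)
        linarith
      · have : n = m + 1 := le_antisymm h hge
        subst this; rfl

lemma v0_small {v : R3} (hv : v ∈ F3set) {ε : ℝ} (hε : 0 < ε) :
    ∃ n, (FS^[n] v) 0 < ε := by
  by_contra hcon
  push_neg at hcon
  have key : ∀ n : ℕ, sig v n ≤ sig v 0 - 2 * n * ε := by
    intro n
    induction n with
    | zero => simp
    | succ n ih =>
        have := sig_succ hv n
        have := hcon n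
        have : sig v (n + 1) ≤ sig v n - 2 * ε := by linarith
        push_cast
        push_cast at ih
        linarith
  obtain ⟨n, hn⟩ := exists_nat_gt (sig v 0 / (2 * ε))
  have h1 : sig v 0 < 2 * n * ε := by
    have h2 : sig v 0 / (2 * ε) * (2 * ε) < n * (2 * ε) :=
      mul_lt_mul_of_pos_right hn (by linarith)
    rw [div_mul_cancel₀ _ (by positivity : (2:ℝ) * ε ≠ 0)] at h2
    linarith
  have := key n
  have := sig_nonneg hv n
  linarith

lemma sig_small {v : R3} (hv : v ∈ F3set) {ε : ℝ} (hε : 0 < ε) :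
    ∃ n, sig v n < ε := by
  by_contra hcon
  push_neg at hcon
  obtain ⟨n₀, hn₀⟩ := v0_small hv (show (0:ℝ) < ε / 12 by linarith)
  have const : ∀ k : ℕ, (FS^[n₀ + k] v) 0 = (FS^[n₀] v) 0 := by
    intro k
    induction k with
    | zero => rfl
    | succ k ih =>
        obtain ⟨h0, h01, h12, hc⟩ := nice_iter hv (n₀ + k)
        have hsig := hcon (n₀ + k)
        rw [sig] at hsig
        have hu0 : (FS^[n₀ + k] v) 0 < ε / 12 := by rw [ih]; exact hn₀
        have hbr : (FS^[n₀ + k] v) 0 ≤ (FS^[n₀ + k] v) 1 - (FS^[n₀ + k] v) 0 := by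
          linarith
        have : (FS^[n₀ + k + 1] v) 0 = (FS^[n₀ + k] v) 0 := by
          rw [Function.iterate_succ_apply']
          exact v0_step_eq h12 hbr
        rw [show n₀ + (k + 1) = n₀ + k + 1 from rfl, this, ih]
  have c_pos : 0 < (FS^[n₀] v) 0 := (nice_iter hv n₀).1
  set c := (FS^[n₀] v) 0 with hc
  have key : ∀ k : ℕ, sig v (n₀ + k) ≤ sig v n₀ - 2 * k * c := by
    intro k
    induction k with
    | zero => simp
    | succ k ih =>
        have h1 := sig_succ hv (n₀ + k)
        rw [const k] at h1
        rw [show n₀ + (k + 1) = n₀ + k + 1 from rfl]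
        push_cast
        push_cast at ih
        linarith
  obtain ⟨k, hk⟩ := exists_nat_gt (sig v n₀ / (2 * c))
  have h1 : sig v n₀ < 2 * k * c := by
    have h2 : sig v n₀ / (2 * c) * (2 * c) < k * (2 * c) :=
      mul_lt_mul_of_pos_right hk (by linarith)
    rw [div_mul_cancel₀ _ (by positivity : (2:ℝ) * c ≠ 0)] at h2
    linarith
  have := key k
  have := sig_nonneg hv (n₀ + k)
  linarith

end FSAux
namespace FSAux

/-- the integer companion sequence `zₙ = (M₁⋯Mₙ)ᵀ z` (defined directly) -/
def zs (v : R3) (z : Z3) : ℕ → Z3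
  | 0 => z
  | n + 1 => zstep (FS^[n] v) (zs v z n)

lemma zs_dot {v : R3} (hv : v ∈ F3set) {z : Z3} (hd : dot3 z v = 0) (n : ℕ) :
    dot3 (zs v z n) (FS^[n] v) = 0 := by
  induction n with
  | zero => exact hd
  | succ n ih =>
      rw [Function.iterate_succ_apply', zs, dot_step (nice_iter hv n).2.2.1, ih]

lemma zs_ne {v : R3} (hv : v ∈ F3set) {z : Z3} (hz : z ≠ 0) (n : ℕ) :
    zs v z n ≠ 0 := by
  induction n with
  | zero => exact hz
  | succ n ih => exact zstep_ne_zero (nice_iter hv n).2.2.1 ih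

lemma Q_succ {v : R3} (hv : v ∈ F3set) (z : Z3) (n : ℕ) :
    Qf (zs v z (n + 1)) (FS^[n + 1] v) =
      Qf (zs v z n) (FS^[n] v)
        - (2 * min (Pp (zs v z n)) (Nn (zs v z n)) : ℤ) * (FS^[n] v) 0 := by
  rw [Function.iterate_succ_apply', zs, Qf_step (nice_iter hv n).2.2.1]

/-- Key irrationality statement: no nonzero integer vector is orthogonal to `v ∈ F₃`. -/
theorem ortho_eq_zero {v : R3} (hv : v ∈ F3set) {z : Z3} (hd : dot3 z v = 0) : z = 0 := by
  by_contra hz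
  -- bootstrapping: every positive integer bounds `min (Pp zₙ) (Nn zₙ)` from below
  have key : ∀ K : ℕ, ∀ n : ℕ, (K + 1 : ℤ) ≤ min (Pp (zs v z n)) (Nn (zs v z n)) := by
    intro K
    induction K with
    | zero =>
        intro n
        exact one_le_minPN (nice_iter hv n) (zs_dot hv hd n) (zs_ne hv hz n)
    | succ K ih =>
        -- first: the lower bound `(K+1) · σₙ ≤ Qₙ`
        have hQlow : ∀ n : ℕ, ((K + 1 : ℤ) : ℝ) * sig v n ≤ Qf (zs v z n) (FS^[n] v) := by
          have tele : ∀ a b : ℕ,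
              Qf (zs v z (a + b)) (FS^[a + b] v)
                + ((K + 1 : ℤ) : ℝ) * (sig v a - sig v (a + b))
              ≤ Qf (zs v z a) (FS^[a] v) := by
            intro a b
            induction b with
            | zero => simp
            | succ b ihb =>
                have h1 := Q_succ hv z (a + b)
                have h2 := sig_succ hv (a + b)
                have h3 := ih (a + b)
                have h0 : 0 < (FS^[a + b] v) 0 := (nice_iter hv (a + b)).1
                have hmul : ((K + 1 : ℤ) : ℝ) * (2 * (FS^[a + b] v) 0)
                    ≤ ((2 * min (Pp (zs v z (a + b))) (Nn (zs v z (a + b))) : ℤ) : ℝ)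
                      * (FS^[a + b] v) 0 := by
                  have hc : ((K + 1 : ℤ) : ℝ) * 2
                      ≤ ((2 * min (Pp (zs v z (a + b))) (Nn (zs v z (a + b))) : ℤ) : ℝ) := by
                    exact_mod_cast (by omega : (K + 1 : ℤ) * 2
                      ≤ 2 * min (Pp (zs v z (a + b))) (Nn (zs v z (a + b))))
                  nlinarith
                rw [show a + (b + 1) = a + b + 1 from rfl, h1, h2]
                linarith [ihb, hmul]
          intro n
          by_contra hlt
          push_neg at hlt
          have hKpos : (0:ℝ) < ((K + 1 : ℤ) : ℝ) := by
            have : (0:ℤ) < (K + 1 : ℤ) := by omega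
            exact_mod_cast this
          set ε : ℝ := ((K + 1 : ℤ) : ℝ) * sig v n - Qf (zs v z n) (FS^[n] v) with hε
          have hεpos : 0 < ε := by rw [hε]; linarith
          obtain ⟨m, hm⟩ := sig_small hv (show 0 < ε / ((K + 1 : ℤ) : ℝ) by positivity)
          have h5 := tele n m
          have h6 : sig v (n + m) ≤ sig v m := sig_mono hv (Nat.le_add_left m n)
          have h7 : 0 ≤ Qf (zs v z (n + m)) (FS^[n + m] v) := Qf_nonneg (nice_iter hv (n + m)) _
          have h8 : ((K + 1 : ℤ) : ℝ) * sig v (n + m) < ε := by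
            have : ((K + 1 : ℤ) : ℝ) * sig v (n + m) ≤ ((K + 1 : ℤ) : ℝ) * sig v m :=
              mul_le_mul_of_nonneg_left h6 (le_of_lt hKpos)
            have h9 : ((K + 1 : ℤ) : ℝ) * sig v m < ((K + 1 : ℤ) : ℝ) * (ε / ((K + 1 : ℤ) : ℝ)) :=
              mul_lt_mul_of_pos_left hm hKpos
            rw [mul_div_cancel₀ _ (ne_of_gt hKpos)] at h9
            linarith
          have : ((K + 1 : ℤ) : ℝ) * sig v n - ε < Qf (zs v z n) (FS^[n] v) := by nlinarith
          rw [hε] at this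
          linarith
        -- second: bootstrap to `K + 2`
        intro n
        obtain ⟨h0, h01, h12, hc⟩ := nice_iter hv n
        have hu2 : (0:ℝ) < (FS^[n] v) 2 := by linarith
        have hsg := sig_gt hv n
        have hQP := Qf_le_P (nice_iter hv n) (zs_dot hv hd n)
        have hQN := Qf_le_N (nice_iter hv n) (zs_dot hv hd n)
        have hQ := hQlow n
        have hKpos : (0:ℝ) < ((K + 1 : ℤ) : ℝ) := by
          have : (0:ℤ) < (K + 1 : ℤ) := by omega
          exact_mod_cast this
        have hP : ((K + 1 : ℤ) : ℝ) < (Pp (zs v z n) : ℝ) := by nlinarith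
        have hN : ((K + 1 : ℤ) : ℝ) < (Nn (zs v z n) : ℝ) := by nlinarith
        have hP' : (K + 1 : ℤ) < Pp (zs v z n) := by exact_mod_cast hP
        have hN' : (K + 1 : ℤ) < Nn (zs v z n) := by exact_mod_cast hN
        push_cast
        omega
  have hfin := key (min (Pp (zs v z 0)) (Nn (zs v z 0))).toNat 0
  omega

end FSAux
namespace FSAux

/-- real action of an integer matrix -/
def mvR (M : Matrix (Fin 3) (Fin 3) ℤ) (w : R3) : R3 := fun i => ∑ j, (M i j : ℝ) * w j

lemma mvR_one (w : R3) : mvR 1 w = w := by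
  funext i
  rw [mvR, Fin.sum_univ_three]
  fin_cases i <;> simp [Matrix.one_apply]

lemma mvR_mul (A B : Matrix (Fin 3) (Fin 3) ℤ) (w : R3) :
    mvR (A * B) w = mvR A (mvR B w) := by
  funext i
  rw [mvR, mvR, Fin.sum_univ_three, Fin.sum_univ_three]
  simp only [Matrix.mul_apply, Fin.sum_univ_three, mvR]
  push_cast
  ring

lemma mvR_recover {u : R3} (h12 : u 1 ≤ u 2) : mvR (Mmat (FSidx u)) (FS u) = u := by
  rcases branch_trichotomy u h12 with h | ⟨h1, h2⟩ | ⟨h1, h2⟩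
  · obtain ⟨e1, e2, -⟩ := FS_eq1 h h12
    rw [e1, e2]
    funext i
    rw [mvR, Fin.sum_univ_three]
    fin_cases i <;> simp [Mmat, Matrix.vecHead, Matrix.vecTail] <;> ring
  · obtain ⟨e1, e2, -⟩ := FS_eq2 h1 h2
    rw [e1, e2]
    funext i
    rw [mvR, Fin.sum_univ_three]
    fin_cases i <;> simp [Mmat, Matrix.vecHead, Matrix.vecTail] <;> ring
  · obtain ⟨e1, e2, -⟩ := FS_eq3 h1 h2
    rw [e1, e2]
    funext i
    rw [mvR, Fin.sum_univ_three]
    fin_cases i <;> simp [Mmat, Matrix.vecHead, Matrix.vecTail] <;> ring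

lemma prodM_zero (v : R3) : prodM v 0 = 1 := by
  rw [prodM]; simp

lemma prodM_succ (v : R3) (n : ℕ) :
    prodM v (n + 1) = prodM v n * Mmat (FSidx (FS^[n] v)) := by
  rw [prodM, prodM, List.range_succ, List.map_append, List.prod_append]
  simp

lemma prodM_recover {v : R3} (hv : v ∈ F3set) (n : ℕ) :
    mvR (prodM v n) (FS^[n] v) = v := by
  induction n with
  | zero => rw [prodM_zero, mvR_one]; rfl
  | succ n ih =>
      rw [prodM_succ, mvR_mul, Function.iterate_succ_apply',
        mvR_recover (nice_iter hv n).2.2.1, ih]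

lemma isUnit_det_Mmat (i : Fin 3) : IsUnit (Mmat i).det := by
  rw [Int.isUnit_iff]
  fin_cases i <;> simp [Mmat, Matrix.det_fin_three]

lemma isUnit_det_prodM (v : R3) (n : ℕ) : IsUnit (prodM v n).det := by
  induction n with
  | zero => rw [prodM_zero]; simp
  | succ n ih =>
      rw [prodM_succ, Matrix.det_mul]
      exact ih.mul (isUnit_det_Mmat _)

lemma dot3_transfer (B : Matrix (Fin 3) (Fin 3) ℤ) (y : Z3) (u : R3) :
    dot3 y (mvR B u) = dot3 (Bᵀ *ᵥ y) u := by
  rw [dot3, dot3, Fin.sum_univ_three, Fin.sum_univ_three]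
  simp only [mvR, Matrix.mulVec, dotProduct, Matrix.transpose_apply,
    Fin.sum_univ_three]
  push_cast
  ring

lemma dot_transVec {v : R3} (hv : v ∈ F3set) (n : ℕ) :
    dot3 (transVec v n) v = (FS^[n] v) 0 := by
  have hdet : IsUnit ((prodM v n)ᵀ).det := by
    rw [Matrix.det_transpose]; exact isUnit_det_prodM v n
  have key : ∀ t : Z3, dot3 t v = dot3 ((prodM v n)ᵀ *ᵥ t) (FS^[n] v) := by
    intro t
    conv_lhs => rw [← prodM_recover hv n]
    rw [dot3_transfer]
  rw [key (transVec v n), transVec, Matrix.mulVec_mulVec, Matrix.mul_nonsing_inv _ hdet,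
    Matrix.one_mulVec, dot3, Fin.sum_univ_three]
  simp [e1]

end FSAux
namespace FSAux

lemma dot3_sub (x y : Z3) (v : R3) : dot3 (x - y) v = dot3 x v - dot3 y v := by
  rw [dot3, dot3, dot3, Fin.sum_univ_three, Fin.sum_univ_three, Fin.sum_univ_three]
  simp only [Pi.sub_apply]
  push_cast
  ring

lemma dot3_sum (s : Finset ℕ) (f : ℕ → Z3) (v : R3) :
    dot3 (∑ i ∈ s, f i) v = ∑ i ∈ s, dot3 (f i) v := by
  unfold dot3
  simp only [Finset.sum_apply, Int.cast_sum, Finset.sum_mul]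
  exact Finset.sum_comm

lemma dot3_smul (c : ℤ) (x : Z3) (v : R3) : dot3 (c • x) v = (c : ℝ) * dot3 x v := by
  rw [dot3, dot3, Fin.sum_univ_three, Fin.sum_univ_three]
  simp only [Pi.smul_apply, smul_eq_mul]
  push_cast
  ring

lemma Tseq_mem_iff (v : R3) (n : ℕ) (x : Z3) :
    x ∈ Tseq v n ↔ ∃ ε : ℕ → ℤ, (∀ i, ε i = 0 ∨ ε i = 1) ∧
      x = ∑ i ∈ Finset.range n, ε i • transVec v i := by
  induction n generalizing x with
  | zero =>
      constructor
      · intro hx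
        exact ⟨fun _ => 0, fun _ => Or.inl rfl, by simpa [Tseq] using hx⟩
      · rintro ⟨ε, -, rfl⟩
        simp [Tseq]
  | succ n ih =>
      constructor
      · intro hx
        rcases hx with hx | ⟨y, hy, rfl⟩
        · obtain ⟨ε, hε01, rfl⟩ := (ih _).mp hx
          refine ⟨fun i => if i = n then 0 else ε i, fun i => ?_, ?_⟩
          · by_cases h : i = n
            · simp [h]
            · simp [h]; exact hε01 i
          · have hagree : ∑ i ∈ Finset.range n, (if i = n then (0:ℤ) else ε i) • transVec v i
                = ∑ i ∈ Finset.range n, ε i • transVec v i :=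
              Finset.sum_congr rfl fun i hi => by
                rw [if_neg (Nat.ne_of_lt (Finset.mem_range.mp hi))]
            rw [Finset.sum_range_succ, hagree]; simp
        · obtain ⟨ε, hε01, rfl⟩ := (ih _).mp hy
          refine ⟨fun i => if i = n then 1 else ε i, fun i => ?_, ?_⟩
          · by_cases h : i = n
            · simp [h]
            · simp [h]; exact hε01 i
          · have hagree : ∑ i ∈ Finset.range n, (if i = n then (1:ℤ) else ε i) • transVec v i
                = ∑ i ∈ Finset.range n, ε i • transVec v i :=
              Finset.sum_congr rfl fun i hi => by
                rw [if_neg (Nat.ne_of_lt (Finset.mem_range.mp hi))]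
            rw [Finset.sum_range_succ, hagree]; simp
      · rintro ⟨ε, hε01, rfl⟩
        rw [Finset.sum_range_succ]
        rcases hε01 n with h | h
        · left
          rw [h, zero_smul, add_zero]
          exact (ih _).mpr ⟨ε, hε01, rfl⟩
        · right
          refine ⟨∑ i ∈ Finset.range n, ε i • transVec v i, (ih _).mpr ⟨ε, hε01, rfl⟩, ?_⟩
          rw [h, one_smul]

end FSAux
/-- For `v ∈ F₃` and `n ≥ 1`,
`Tₙ = {x ∈ ℤ³ : ⟨x,v⟩ = Σ_{i<n} εᵢ v₁⁽ⁱ⁾, εᵢ ∈ {0,1}}`. -/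
theorem Tseq_eq_subset_sums (v : R3) (hv : v ∈ F3set) (n : ℕ) (hn : 1 ≤ n) :
    Tseq v n = {x : Z3 | ∃ ε : Fin n → ℤ, (∀ i, ε i = 0 ∨ ε i = 1) ∧
      dot3 x v = ∑ i : Fin n, (ε i : ℝ) * (FS^[(i : ℕ)] v) 0} := by
  ext x
  simp only [Set.mem_setOf_eq]
  constructor
  · intro hx
    obtain ⟨ε, hε01, hxeq⟩ := (FSAux.Tseq_mem_iff v n x).mp hx
    refine ⟨fun i => ε i, fun i => hε01 i, ?_⟩
    rw [hxeq, FSAux.dot3_sum]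
    have h1 : ∀ i ∈ Finset.range n,
        dot3 (ε i • transVec v i) v = (ε i : ℝ) * (FS^[i] v) 0 := fun i _ => by
      rw [FSAux.dot3_smul, FSAux.dot_transVec hv]
    rw [Finset.sum_congr rfl h1]
    exact (Fin.sum_univ_eq_sum_range (fun i => ((ε i : ℤ) : ℝ) * (FS^[i] v) 0) n).symm
  · rintro ⟨ε, hε01, hdot⟩
    set εN : ℕ → ℤ := fun i => if h : i < n then ε ⟨i, h⟩ else 0 with hεN
    set y : Z3 := ∑ i ∈ Finset.range n, εN i • transVec v i with hy
    have hyT : y ∈ Tseq v n := by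
      refine (FSAux.Tseq_mem_iff v n y).mpr ⟨εN, fun i => ?_, rfl⟩
      by_cases h : i < n
      · simpa [hεN, h] using hε01 ⟨i, h⟩
      · simp [hεN, h]
    have hydot : dot3 y v = ∑ i : Fin n, (ε i : ℝ) * (FS^[(i : ℕ)] v) 0 := by
      rw [hy, FSAux.dot3_sum]
      have h1 : ∀ i ∈ Finset.range n,
          dot3 (εN i • transVec v i) v = (εN i : ℝ) * (FS^[i] v) 0 := fun i _ => by
        rw [FSAux.dot3_smul, FSAux.dot_transVec hv]
      rw [Finset.sum_congr rfl h1,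
        ← Fin.sum_univ_eq_sum_range (fun i => ((εN i : ℤ) : ℝ) * (FS^[i] v) 0) n]
      refine Finset.sum_congr rfl fun i _ => ?_
      have : εN (i : ℕ) = ε i := by simp [hεN, i.isLt]
      rw [this]
    have hz : dot3 (x - y) v = 0 := by
      rw [FSAux.dot3_sub, hdot, hydot]; ring
    have hxy : x - y = 0 := FSAux.ortho_eq_zero hv hz
    have : x = y := by
      have := sub_eq_zero.mp hxy
      exact this
    rw [this]; exact hyT
end
end

section
/- Let v ∈ F₃, let (Tₙ)ₙ be the associated sequence of subsets of ℤ³, and let 𝐏ₙ be the set of distinguished vertices of the pattern Pₙ = Σ_{i₁} ∘ ⋯ ∘ Σ_{iₙ}(U). Then 𝐏ₙ ⊆ Tₙ for every n ∈ ℕ. -/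
open Matrix
open scoped Classical

noncomputable section

/-- A unit face is a pair `(x, i)` of its distinguished vertex `x ∈ ℤ³` and
its type `i ∈ Fin 3` (encoding the types `1, 2, 3`). A pattern is a set of faces. -/
abbrev Face := Z3 × Fin 3

/-- The lower half unit cube `U = [0,1]* ∪ [0,2]* ∪ [0,3]*`. -/
def Uset : Set Face := {(0, 0), (0, 1), (0, 2)}

/-- Image of the face `[0, t]*` under the dual substitution `Σᵢ`. -/
def dualBase (i t : Fin 3) : Set Face :=
  if t = i then Uset
  else if (i = 0 ∧ t = 1) ∨ (i ≠ 0 ∧ t = 0) then {(e1, 1)}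
  else {(e1, 2)}

/-- Image of a face under the dual substitution `Σᵢ`:
`Σᵢ([x,t]*) = (Mᵢᵀ)⁻¹ x + Σᵢ([0,t]*)`. -/
def dualFace (i : Fin 3) (f : Face) : Set Face :=
  (fun g : Face => (((Mmat i)ᵀ)⁻¹ *ᵥ f.1 + g.1, g.2)) '' dualBase i f.2

/-- Dual substitution `Σᵢ` extended to patterns. -/
def dualPat (i : Fin 3) (P : Set Face) : Set Face := ⋃ f ∈ P, dualFace i f

/-- The translate of a pattern by `t ∈ ℤ³`. -/
def translatePat (t : Z3) (P : Set Face) : Set Face := (fun f : Face => (f.1 + t, f.2)) '' P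

/-- The stepped plane `Γ_w`. -/
def stepped (w : R3) : Set Face := {f | 0 ≤ dot3 f.1 w ∧ dot3 f.1 w < w f.2}

/-- The nine patterns of `L_FS` (base representatives, used up to translation). -/
def LFS : Set (Set Face) :=
  { {(0, 0), (0, 1)},
    {(0, 0), (![-1,1,0], 1)},
    {(0, 0), (0, 2)},
    {(0, 0), (![-1,0,1], 2)},
    {(0, 1), (0, 2)},
    {(0, 1), (![0,-1,1], 2)},
    {(0, 1), (![1,0,0], 1), (0, 2)},
    {(0, 2), (![1,0,0], 2), (0, 1)},
    {(0, 2), (![0,1,0], 2), (0, 0)} }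

/-- The twelve two-face edge-connected patterns (base representatives). -/
def Ledge : Set (Set Face) :=
  { {(0, 0), (0, 1)},
    {(0, 0), (![-1,1,0], 1)},
    {(0, 0), (0, 2)},
    {(0, 0), (![-1,0,1], 2)},
    {(0, 1), (0, 2)},
    {(0, 1), (![0,-1,1], 2)},
    {(0, 0), (![0,1,0], 0)},
    {(0, 0), (![0,0,1], 0)},
    {(0, 1), (![1,0,0], 1)},
    {(0, 1), (![0,0,1], 1)},
    {(0, 2), (![1,0,0], 2)},
    {(0, 2), (![0,1,0], 2)} }

/-- The four forbidden patterns
`[0,1]*∪[(0,1,0),1]*`, `[0,1]*∪[(0,0,1),1]*`, `[0,2]*∪[(0,0,1),2]*`, `[0,3]*∪[(1,1,0),3]*`. -/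
def Forbidden : Set (Set Face) :=
  { {(0, 0), (![0,1,0], 0)},
    {(0, 0), (![0,0,1], 0)},
    {(0, 1), (![0,0,1], 1)},
    {(0, 2), (![1,1,0], 2)} }

/-- A pattern `P` is `L`-covered if any two of its faces are joined by a chain of
translates of elements of `L`, all contained in `P`, with consecutive ones sharing a face. -/
def IsCovered (L : Set (Set Face)) (P : Set Face) : Prop :=
  ∀ e ∈ P, ∀ f ∈ P, ∃ n : ℕ, ∃ Q : Fin (n + 1) → Set Face,
    (∀ k, ∃ R ∈ L, ∃ t : Z3, Q k = translatePat t R) ∧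
    e ∈ Q 0 ∧ f ∈ Q (Fin.last n) ∧
    (∀ k, Q k ⊆ P) ∧
    (∀ k : Fin n, (Q k.castSucc ∩ Q k.succ).Nonempty)

/-- A pattern `P` is strongly `L`-covered if it is `L`-covered and every translate of an
element of `L_edge` contained in `P` is completed within `P` by a translate of an element of `L`. -/
def IsStronglyCovered (L : Set (Set Face)) (P : Set Face) : Prop :=
  IsCovered L P ∧
  ∀ X ∈ Ledge, ∀ t : Z3, translatePat t X ⊆ P →
    ∃ Y ∈ L, ∃ s : Z3, translatePat t X ⊆ translatePat s Y ∧ translatePat s Y ⊆ P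

/-- The geometric realization of a face in `ℝ³`. -/
def faceGeom (f : Face) : Set R3 :=
  {q | q f.2 = (f.1 f.2 : ℝ) ∧ ∀ j, j ≠ f.2 → (f.1 j : ℝ) ≤ q j ∧ q j ≤ (f.1 j : ℝ) + 1}

/-- The geometric realization of a pattern in `ℝ³`. -/
def patGeom (P : Set Face) : Set R3 := ⋃ f ∈ P, faceGeom f

/-- `A` is an `L_FS`-annulus of `P` in the stepped plane `Γ`. -/
def IsAnnulus (Γ P A : Set Face) : Prop :=
  IsCovered LFS P ∧ IsCovered LFS (A ∪ P) ∧ IsCovered LFS (Γ \ (A ∪ P)) ∧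
  IsStronglyCovered LFS A ∧
  A ∩ P = ∅ ∧
  patGeom P ∩ closure (patGeom (Γ \ (P ∪ A))) = ∅

/-- Apply a finite list of dual substitutions, the head being applied last:
`applySubs [i₁, …, iₙ] P = Σ_{i₁} ∘ ⋯ ∘ Σ_{iₙ}(P)`. -/
def applySubs : List (Fin 3) → Set Face → Set Face
  | [], P => P
  | i :: l, P => dualPat i (applySubs l P)

/-- The pattern `Pₙ = Σ_{i₁} ∘ ⋯ ∘ Σ_{iₙ}(U)` associated with the F-expansion of `v`. -/
def PatN (v : R3) (n : ℕ) : Set Face :=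
  applySubs ((List.range n).map (fun j => FSidx (FS^[j] v))) Uset

/-- The set `𝐏ₙ` of distinguished vertices of the faces of `Pₙ`. -/
def Pverts (v : R3) (n : ℕ) : Set Z3 := {x | ∃ t : Fin 3, (x, t) ∈ PatN v n}
lemma prodM_succ' (v : R3) (n : ℕ) :
    prodM v (n+1) = Mmat (FSidx v) * prodM (FS v) n := by
  unfold prodM
  rw [List.range_succ_eq_map, List.map_cons, List.prod_cons, List.map_map]
  rfl

lemma transVec_succ' (v : R3) (n : ℕ) :
    transVec v (n+1) = ((Mmat (FSidx v))ᵀ)⁻¹ *ᵥ transVec (FS v) n := by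
  unfold transVec
  rw [prodM_succ', Matrix.transpose_mul, Matrix.mul_inv_rev, ← Matrix.mulVec_mulVec]

lemma transVec_zero' (v : R3) : transVec v 0 = e1 := by
  simp [transVec, prodM, Matrix.one_mulVec]

lemma Tseq_map_mem (n : ℕ) : ∀ (v : R3), ∀ y ∈ Tseq (FS v) n,
    ((Mmat (FSidx v))ᵀ)⁻¹ *ᵥ y ∈ Tseq v (n+1) ∧
    ((Mmat (FSidx v))ᵀ)⁻¹ *ᵥ y + e1 ∈ Tseq v (n+1) := by
  induction n with
  | zero =>
    intro v y hy
    have hy0 : y = 0 := hy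
    subst hy0
    constructor
    · exact Or.inl (by simp [Matrix.mulVec_zero, Tseq])
    · refine Or.inr ⟨0, rfl, ?_⟩
      simp [Matrix.mulVec_zero, transVec_zero']
  | succ n ih =>
    intro v y hy
    rcases hy with hy | ⟨z, hz, rfl⟩
    · rcases ih v y hy with ⟨h1, h2⟩
      exact ⟨Or.inl h1, Or.inl h2⟩
    · rcases ih v z hz with ⟨h1, h2⟩
      have hmv : ((Mmat (FSidx v))ᵀ)⁻¹ *ᵥ (z + transVec (FS v) n)
          = ((Mmat (FSidx v))ᵀ)⁻¹ *ᵥ z + transVec v (n+1) := by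
        rw [Matrix.mulVec_add, transVec_succ']
      constructor
      · exact Or.inr ⟨_, h1, hmv.symm⟩
      · refine Or.inr ⟨((Mmat (FSidx v))ᵀ)⁻¹ *ᵥ z + e1, h2, ?_⟩
        rw [hmv]; abel

lemma PatN_succ' (v : R3) (n : ℕ) :
    PatN v (n+1) = dualPat (FSidx v) (PatN (FS v) n) := by
  unfold PatN
  rw [List.range_succ_eq_map, List.map_cons, List.map_map]
  show applySubs (_ :: _) Uset = _
  rw [applySubs]
  rfl

lemma dualBase_fst (i t : Fin 3) (g : Face) (hg : g ∈ dualBase i t) :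
    g.1 = 0 ∨ g.1 = e1 := by
  unfold dualBase at hg
  split_ifs at hg
  · rcases hg with h | h | h <;> subst h <;> exact Or.inl rfl
  · exact Or.inr (by rw [hg])
  · exact Or.inr (by rw [hg])

theorem Pverts_subset_Tseq' (n : ℕ) : ∀ (v : R3), Pverts v n ⊆ Tseq v n := by
  induction n with
  | zero =>
    intro v x ⟨t, ht⟩
    have : PatN v 0 = Uset := rfl
    rw [this] at ht
    simp only [Uset, Set.mem_insert_iff, Set.mem_singleton_iff, Prod.mk.injEq] at ht
    rcases ht with ⟨rfl, -⟩ | ⟨rfl, -⟩ | ⟨rfl, -⟩ <;> rfl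
  | succ n ih =>
    intro v x hx
    obtain ⟨t, ht⟩ := hx
    rw [PatN_succ'] at ht
    simp only [dualPat, Set.mem_iUnion, exists_prop] at ht
    obtain ⟨f, hf, g, hg, heq⟩ := ht
    have hx1 : x = ((Mmat (FSidx v))ᵀ)⁻¹ *ᵥ f.1 + g.1 := (congrArg Prod.fst heq).symm
    have hfT : f.1 ∈ Tseq (FS v) n := ih (FS v) ⟨f.2, hf⟩
    rcases Tseq_map_mem n v f.1 hfT with ⟨h1, h2⟩
    rcases dualBase_fst _ _ g hg with h0 | h0 <;> rw [hx1, h0]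
    · simpa using h1
    · exact h2

/-- For `v ∈ F₃`, the set `𝐏ₙ` of distinguished vertices of
`Pₙ = Σ_{i₁} ∘ ⋯ ∘ Σ_{iₙ}(U)` is contained in `Tₙ`. -/
theorem Pverts_subset_Tseq (v : R3) (hv : v ∈ F3set) (n : ℕ) :
    Pverts v n ⊆ Tseq v n :=
  Pverts_subset_Tseq' n v
end
end
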